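/- arXiv:1410.6046 — 6 statements merged into one kernel-verified Lean document; each statement's English description precedes it below -/
import Mathlib

section
/- Let a be an infinite (0,1)-vector and A the matrix with constant columns whose i-th column entries all equal a_i. If σ occurs in τ as an a-vincular pattern (σ ∈_a τ), then σ ≤_a τ in the a-vincular pattern poset. -/
open scoped Classical

/-- A finite permutation of arbitrary length: a length `n` together with a
permutation of `Fin n` (in one-line notation, the entry at position `i` is
its value at `i`). -/
abbrev QPerm : Type := Σ n : ℕ, Equiv.Perm (Fin n)

/-- `IsOcc a σ τ f` : the strictly monotone position map `f` selects an
occurrence of the pattern `σ` in `τ` (order-isomorphically), where for every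
gap index `j ≥ 1` (1-indexed) with `a j = false` the `j`-th and `(j+1)`-th
selected positions must be adjacent in `τ`. -/
def IsOcc (a : ℕ → Bool) {k n : ℕ} (σ : Equiv.Perm (Fin k)) (τ : Equiv.Perm (Fin n))
    (f : Fin k → Fin n) : Prop :=
  StrictMono f ∧ (∀ i j : Fin k, σ i < σ j ↔ τ (f i) < τ (f j)) ∧
    ∀ (i : ℕ) (h : i + 1 < k), a (i + 1) = false →
      (f ⟨i + 1, h⟩ : ℕ) = (f ⟨i, Nat.lt_of_succ_lt h⟩ : ℕ) + 1

/-- `σ` occurs in `τ` as an `a`-vincular pattern. -/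
def VOcc (a : ℕ → Bool) (σ τ : QPerm) : Prop :=
  ∃ f : Fin σ.1 → Fin τ.1, IsOcc a σ.2 τ.2 f

/-- Covering relation of the `a`-vincular pattern poset. -/
def VCov (a : ℕ → Bool) (σ τ : QPerm) : Prop :=
  σ.1 + 1 = τ.1 ∧ VOcc a σ τ

/-- The `a`-vincular pattern order: reflexive-transitive closure of covering. -/
def VLe (a : ℕ → Bool) (σ τ : QPerm) : Prop :=
  Relation.ReflTransGen (VCov a) σ τ

/-- Occurrence as an `A`-vincular pattern for a matrix `A` (rows and columns
1-indexed via `A i j`); a pattern of length `k` uses row `k - 1`. -/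
def MOcc (A : ℕ → ℕ → Bool) (σ τ : QPerm) : Prop :=
  VOcc (fun j => A (σ.1 - 1) j) σ τ

/-- Covering relation of the `A`-vincular pattern poset. -/
def MCov (A : ℕ → ℕ → Bool) (σ τ : QPerm) : Prop :=
  σ.1 + 1 = τ.1 ∧ MOcc A σ τ

/-- The `A`-vincular pattern order. -/
def MLe (A : ℕ → ℕ → Bool) (σ τ : QPerm) : Prop :=
  Relation.ReflTransGen (MCov A) σ τ

/-- The quasi-consecutive adjacency vector `a = (1,0,0,…)` (1-indexed). -/
def qa : ℕ → Bool := fun j => decide (j = 1)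

/-- Quasi-consecutive pattern occurrence. -/
def QOcc (σ τ : QPerm) : Prop := VOcc qa σ τ

/-- Covering in the quasi-consecutive pattern poset. -/
def QCov (σ τ : QPerm) : Prop := VCov qa σ τ

/-- The quasi-consecutive pattern poset order. -/
def QLe (σ τ : QPerm) : Prop := VLe qa σ τ

/-- All permutations of length at most `n`, as a finset. -/
def permsUpTo (n : ℕ) : Finset QPerm :=
  (Finset.range (n + 1)).sigma fun _ => Finset.univ

/-- Möbius function of the quasi-consecutive pattern poset, computed with
fuel (the fuel `τ.1` always suffices, since lengths strictly increase along
the order). -/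
noncomputable def qMuAux : ℕ → QPerm → QPerm → ℤ
  | 0, σ, τ => if σ = τ then 1 else 0
  | m + 1, σ, τ =>
      if σ = τ then 1
      else -∑ z ∈ (permsUpTo τ.1).filter fun z => QLe σ z ∧ QLe z τ ∧ z ≠ τ,
            qMuAux m σ z

/-- The Möbius function of the quasi-consecutive pattern poset. -/
noncomputable def qMu (σ τ : QPerm) : ℤ := qMuAux τ.1 σ τ

/-- The interval `[σ, τ]` in the quasi-consecutive pattern poset. -/
def QInterval (σ τ : QPerm) : Set QPerm := {ρ | QLe σ ρ ∧ QLe ρ τ}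

/-- The interval `[σ, τ]` is a chain. -/
def QChain (σ τ : QPerm) : Prop :=
  ∀ ρ₁ ρ₂ : QPerm, ρ₁ ∈ QInterval σ τ → ρ₂ ∈ QInterval σ τ → QLe ρ₁ ρ₂ ∨ QLe ρ₂ ρ₁

/-- The interval `[σ, τ]` is order-isomorphic to the product of a chain with
`p + 1` elements and a chain with `q + 1` elements (componentwise order). -/
def IsGridInterval (σ τ : QPerm) (p q : ℕ) : Prop :=
  ∃ e : QInterval σ τ ≃ Fin (p + 1) × Fin (q + 1),
    ∀ ρ₁ ρ₂ : QInterval σ τ, QLe ρ₁.1 ρ₂.1 ↔ e ρ₁ ≤ e ρ₂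

/-- The occurrence `f` involves position `i` (0-indexed) of the big permutation. -/
def Involves {k n : ℕ} (f : Fin k → Fin n) (i : ℕ) : Prop :=
  ∃ j : Fin k, (f j : ℕ) = i

/-- The occurrence `f` is consecutive: all selected positions are adjacent. -/
def ConsecOcc {k n : ℕ} (f : Fin k → Fin n) : Prop :=
  ∀ (i : ℕ) (h : i + 1 < k),
    (f ⟨i + 1, h⟩ : ℕ) = (f ⟨i, Nat.lt_of_succ_lt h⟩ : ℕ) + 1

/-- The first two entries of `τ` are not consecutive integers. -/
def NotConsecFirstTwo (τ : QPerm) : Prop :=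
  ∀ i j : Fin τ.1, (i : ℕ) = 0 → (j : ℕ) = 1 →
    (τ.2 i : ℕ) + 1 ≠ (τ.2 j : ℕ) ∧ (τ.2 j : ℕ) + 1 ≠ (τ.2 i : ℕ)

/-- `τ` is a monotone (increasing or decreasing) permutation. -/
def IsMonotonePerm (τ : QPerm) : Prop :=
  (∀ i j : Fin τ.1, i < j → τ.2 i < τ.2 j) ∨ (∀ i j : Fin τ.1, i < j → τ.2 j < τ.2 i)

lemma sm_le_apply {k n : ℕ} {f : Fin k → Fin n} (hf : StrictMono f) :
    ∀ j : Fin k, (j : ℕ) ≤ (f j : ℕ) := by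
  have H : ∀ v : ℕ, ∀ j : Fin k, (j : ℕ) = v → v ≤ (f j : ℕ) := by
    intro v
    induction v with
    | zero => intro j _; omega
    | succ v ihv =>
      intro j hj
      have hv : v < k := by omega
      have h1 := ihv ⟨v, hv⟩ rfl
      have h2 : f ⟨v, hv⟩ < f j := hf (by simp [Fin.lt_def]; omega)
      rw [Fin.lt_def] at h2
      omega
  exact fun j => H (j : ℕ) j rfl

lemma succAbove_val {m : ℕ} (p : Fin (m + 1)) (i : Fin m) :
    ((p.succAbove i : Fin (m + 1)) : ℕ) =
      if (i : ℕ) < (p : ℕ) then (i : ℕ) else (i : ℕ) + 1 := by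
  rcases lt_or_ge i.castSucc p with h | h
  · rw [Fin.succAbove_of_castSucc_lt _ _ h]
    rw [Fin.lt_def] at h
    simp only [Fin.coe_castSucc] at h ⊢
    split <;> omega
  · rw [Fin.succAbove_of_le_castSucc _ _ h]
    rw [Fin.le_def] at h
    simp only [Fin.coe_castSucc, Fin.val_succ] at h ⊢
    split <;> omega

lemma sm_fin_id {k : ℕ} {f : Fin k → Fin k} (hf : StrictMono f) : ∀ i, f i = i := by
  have hbij : Function.Bijective f := Finite.injective_iff_bijective.mp hf.injective
  have hr : Set.range f = Set.range (id : Fin k → Fin k) := by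
    rw [Set.range_id, Set.range_eq_univ]
    exact hbij.2
  have h2 : StrictMono (id : Fin k → Fin k) := strictMono_id
  have := (hf.range_inj h2).mp hr
  intro i; exact congrFun this i


section Main

lemma vocc_key (a : ℕ → Bool) : ∀ d : ℕ, ∀ σ τ : QPerm, τ.1 = σ.1 + d → VOcc a σ τ → VLe a σ τ := by
  intro d
  induction d with
  | zero =>
    rintro ⟨k, sp⟩ ⟨n, tp⟩ hn ⟨f, hmono, hord, hadj⟩
    dsimp only at hn hord hadj
    have hn' : n = k := by omega
    subst hn'
    have hid : ∀ i, f i = i := sm_fin_id hmono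
    have hord' : ∀ i j, sp i < sp j ↔ tp i < tp j := by
      intro i j
      rw [hord i j, hid i, hid j]
    have hu : StrictMono (fun x => tp (sp.symm x)) := by
      intro x y hxy
      exact (hord' (sp.symm x) (sp.symm y)).mp (by simpa using hxy)
    have hsp : sp = tp := by
      apply Equiv.ext
      intro y
      have := sm_fin_id hu (sp y)
      have h2 : tp y = sp y := by simpa using this
      exact h2.symm
    rw [hsp]
    exact Relation.ReflTransGen.refl
  | succ d ih =>
    rintro ⟨k, sp⟩ ⟨n, tp⟩ hn ⟨f, hmono, hord, hadj⟩
    dsimp only at hn hord hadj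
    have hn' : n = (k + d) + 1 := by omega
    subst hn'
    -- an uninvolved position exists
    have hnsurj : ¬ Function.Surjective f := by
      intro hs
      have := Fintype.card_le_of_surjective f hs
      simp at this
    unfold Function.Surjective at hnsurj
    push_neg at hnsurj
    obtain ⟨p0, hp0⟩ := hnsurj
    -- choose a good uninvolved position p
    have hPgood : ∃ p : Fin (k + d + 1), (∀ j, f j ≠ p) ∧
        ((p : ℕ) = k + d ∨ (p : ℕ) = 0 ∨ a (p : ℕ) = true) := by
      by_cases hlast : ∀ j, (f j : ℕ) ≠ k + d
      · exact ⟨Fin.last (k + d), fun j h => hlast j (by rw [h]; rfl), Or.inl rfl⟩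
      · push_neg at hlast
        obtain ⟨j0, hj0⟩ := hlast
        have hexn : ∃ i : ℕ, ∀ j, (f j : ℕ) ≠ i :=
          ⟨(p0 : ℕ), fun j h => hp0 j (Fin.ext h)⟩
        set pv := Nat.find hexn with hpvdef
        have hpv : ∀ j, (f j : ℕ) ≠ pv := Nat.find_spec hexn
        have hpvle : pv ≤ (p0 : ℕ) := Nat.find_min' hexn (fun j h => hp0 j (Fin.ext h))
        have hpvlt : pv < k + d + 1 := lt_of_le_of_lt hpvle p0.isLt
        have step1 : ∀ i, i < pv → ∃ hik : i < k, (f ⟨i, hik⟩ : ℕ) = i := by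
          intro i
          induction i using Nat.strong_induction_on with
          | _ i ihh =>
            intro hi
            have hinv : ¬ ∀ j, (f j : ℕ) ≠ i := Nat.find_min hexn hi
            push_neg at hinv
            obtain ⟨j, hj⟩ := hinv
            have hle : (j : ℕ) ≤ (f j : ℕ) := sm_le_apply hmono j
            have hji : (j : ℕ) = i := by
              rcases Nat.lt_or_ge (j : ℕ) i with hlt | hge
              · obtain ⟨hk', hval⟩ := ihh (j : ℕ) hlt (by omega)
                have hjj : (⟨(j : ℕ), hk'⟩ : Fin k) = j := Fin.ext rfl
                rw [hjj] at hval
                omega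
              · omega
            refine ⟨hji ▸ j.isLt, ?_⟩
            have hjj : (⟨i, hji ▸ j.isLt⟩ : Fin k) = j := Fin.ext hji.symm
            rw [hjj, hj]
        have step2 : pv < k := by
          by_contra hcon
          push_neg at hcon
          have hjlt : (j0 : ℕ) < k := j0.isLt
          obtain ⟨hk', hval⟩ := step1 (j0 : ℕ) (by omega)
          have hjj : (⟨(j0 : ℕ), hk'⟩ : Fin k) = j0 := Fin.ext rfl
          rw [hjj] at hval
          omega
        have step3 : pv = 0 ∨ a pv = true := by
          by_contra hcon
          push_neg at hcon
          obtain ⟨hpv0, hpva⟩ := hcon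
          have hfa : a (pv - 1 + 1) = false := by
            have : pv - 1 + 1 = pv := by omega
            rw [this]
            exact Bool.not_eq_true _ ▸ (by simpa using hpva)
          have h4 := hadj (pv - 1) (by omega) hfa
          obtain ⟨hk', hval⟩ := step1 (pv - 1) (by omega)
          have : (f ⟨pv - 1 + 1, show pv - 1 + 1 < k by omega⟩ : ℕ) = pv := by
            rw [h4]
            rw [hval]
            omega
          exact hpv _ this
        exact ⟨⟨pv, hpvlt⟩, fun j h => hpv j (by rw [h]), by
          rcases step3 with h | h
          · exact Or.inr (Or.inl h)
          · exact Or.inr (Or.inr h)⟩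
    obtain ⟨p, hp, hp3⟩ := hPgood
    -- the deletion data
    set g : Fin (k + d) → Fin (k + d + 1) := p.succAbove with hgdef
    have hgmono : StrictMono g := Fin.strictMono_succAbove p
    have hgval : ∀ i : Fin (k + d),
        (g i : ℕ) = if (i : ℕ) < (p : ℕ) then (i : ℕ) else (i : ℕ) + 1 :=
      fun i => succAbove_val p i
    set F : Fin (k + d) → Fin (k + d + 1) := fun i => tp (g i) with hFdef
    have hFinj : Function.Injective F := fun i j h => hgmono.injective (tp.injective h)
    set s : Finset (Fin (k + d + 1)) := Finset.image F Finset.univ with hsdef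
    have hcard : s.card = k + d := by
      rw [hsdef, Finset.card_image_of_injective _ hFinj, Finset.card_univ]
      simp
    set e := s.orderIsoOfFin hcard with hedef
    have hmemF : ∀ i, F i ∈ s := fun i => Finset.mem_image_of_mem _ (Finset.mem_univ i)
    set ρf : Fin (k + d) → Fin (k + d) := fun i => e.symm ⟨F i, hmemF i⟩ with hρfdef
    have hρlt : ∀ i j, ρf i < ρf j ↔ F i < F j := by
      intro i j
      rw [hρfdef]
      simp only []
      rw [e.symm.lt_iff_lt]
      exact Subtype.mk_lt_mk
    have hρinj : Function.Injective ρf := by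
      intro i j hij
      apply hFinj
      have h1 : ¬ F i < F j := by rw [← hρlt]; simp [hij]
      have h2 : ¬ F j < F i := by rw [← hρlt]; simp [hij]
      exact le_antisymm (not_lt.mp h2) (not_lt.mp h1)
    set ρperm : Equiv.Perm (Fin (k + d)) :=
      Equiv.ofBijective ρf (Finite.injective_iff_bijective.mp hρinj) with hρdef
    have hρapp : ∀ i, ρperm i = ρf i := fun i => rfl
    -- f' : the occurrence of σ in ρ
    have hch : ∀ j, ∃ y, p.succAbove y = f j := fun j => Fin.exists_succAbove_eq (hp j)
    set f' : Fin k → Fin (k + d) := fun j => (hch j).choose with hf'def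
    have hgf' : ∀ j, g (f' j) = f j := fun j => (hch j).choose_spec
    -- occurrence of ρ in τ
    have occ2 : IsOcc a ρperm tp g := by
      refine ⟨hgmono, ?_, ?_⟩
      · intro i j
        rw [hρapp, hρapp]
        exact hρlt i j
      · intro i h hai
        rw [hgval, hgval]
        have hi1 : (⟨i + 1, h⟩ : Fin (k + d)) = ⟨i + 1, h⟩ := rfl
        simp only []
        rcases hp3 with h3 | h3 | h3
        · split <;> split <;> omega
        · split <;> split <;> omega
        · by_cases hpi : (p : ℕ) = i + 1
          · rw [hpi] at h3; rw [h3] at hai; exact absurd hai (by simp)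
          · split <;> split <;> omega
    -- occurrence of σ in ρ
    have occ1 : IsOcc a sp ρperm f' := by
      refine ⟨?_, ?_, ?_⟩
      · intro i j hij
        have : g (f' i) < g (f' j) := by rw [hgf', hgf']; exact hmono hij
        exact hgmono.lt_iff_lt.mp this
      · intro i j
        rw [hord i j, hρapp, hρapp]
        rw [hρlt]
        show tp (f i) < tp (f j) ↔ tp (g (f' i)) < tp (g (f' j))
        rw [hgf', hgf']
      · intro i h hai
        have hadj0 := hadj i h hai
        set x := f' ⟨i, Nat.lt_of_succ_lt h⟩ with hxdef
        set y := f' ⟨i + 1, h⟩ with hydef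
        have hx : (f ⟨i, Nat.lt_of_succ_lt h⟩ : ℕ) =
            if (x : ℕ) < (p : ℕ) then (x : ℕ) else (x : ℕ) + 1 := by
          rw [← hgf' ⟨i, Nat.lt_of_succ_lt h⟩]
          exact hgval x
        have hy : (f ⟨i + 1, h⟩ : ℕ) =
            if (y : ℕ) < (p : ℕ) then (y : ℕ) else (y : ℕ) + 1 := by
          rw [← hgf' ⟨i + 1, h⟩]
          exact hgval y
        have hxne : (f ⟨i, Nat.lt_of_succ_lt h⟩ : ℕ) ≠ (p : ℕ) :=
          fun hh => hp _ (Fin.ext hh)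
        have hyne : (f ⟨i + 1, h⟩ : ℕ) ≠ (p : ℕ) :=
          fun hh => hp _ (Fin.ext hh)
        show (y : ℕ) = (x : ℕ) + 1
        rw [hx] at hxne hadj0
        rw [hy] at hyne hadj0
        split at hadj0 <;> split at hadj0 <;> omega
    have hcov : VCov a ⟨k + d, ρperm⟩ ⟨k + d + 1, tp⟩ := ⟨rfl, ⟨g, occ2⟩⟩
    have hle : VLe a ⟨k, sp⟩ ⟨k + d, ρperm⟩ := ih ⟨k, sp⟩ ⟨k + d, ρperm⟩ rfl ⟨f', occ1⟩
    exact Relation.ReflTransGen.tail hle hcov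

end Main

/-- For a constant-column matrix encoded by the vector `a`: if `σ` occurs in
`τ` as an `a`-vincular pattern, then `σ ≤ₐ τ`. -/
theorem vocc_implies_vle (a : ℕ → Bool) (σ τ : QPerm) (h : VOcc a σ τ) :
    VLe a σ τ := by
  obtain ⟨f, hmono, -, -⟩ := id h
  have hle : σ.1 ≤ τ.1 := by
    have := Fintype.card_le_of_injective f hmono.injective
    simpa using this
  exact vocc_key a (τ.1 - σ.1) σ τ (by omega) h
end

section
/- Let a = (1,0,0,0,...). Then σ ≤_a τ in the quasi-consecutive pattern poset if and only if there is an occurrence of σ in τ (a subsequence order-isomorphic to σ) in which all entries are adjacent in τ except possibly the first and the second. -/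
open scoped Classical

/- ### Auxiliary lemmas -/

lemma qa_eq_false {i : ℕ} (h : i ≠ 0) : qa (i + 1) = false := by
  simp [qa]; omega

lemma qa_false_ne {i : ℕ} (h : qa (i + 1) = false) : i ≠ 0 := by
  simp [qa] at h; omega

lemma fin_le_apply' {k n : ℕ} {f : Fin k → Fin n} (hf : StrictMono f) :
    ∀ (i : ℕ) (hi : i < k), i ≤ (f ⟨i, hi⟩ : ℕ) := by
  intro i
  induction i with
  | zero => exact fun _ => Nat.zero_le _
  | succ m ih =>
    intro hi
    have h1 := ih (Nat.lt_of_succ_lt hi)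
    have h3 : (f ⟨m, Nat.lt_of_succ_lt hi⟩ : ℕ) < (f ⟨m + 1, hi⟩ : ℕ) :=
      hf (by simp [Fin.lt_def])
    omega

lemma fin_le_apply {k n : ℕ} {f : Fin k → Fin n} (hf : StrictMono f) (i : Fin k) :
    (i : ℕ) ≤ (f i : ℕ) :=
  fin_le_apply' hf i.1 i.2

lemma fin_strictMono_id {n : ℕ} {f : Fin n → Fin n} (hf : StrictMono f) (i : Fin n) :
    f i = i := by
  have h1 := fin_le_apply hf i
  have hrev : StrictMono (fun j : Fin n => (f j.rev).rev) := by
    intro a b hab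
    exact Fin.rev_lt_rev.mpr (hf (Fin.rev_lt_rev.mpr hab))
  have h2 := fin_le_apply hrev i.rev
  simp only [Fin.rev_rev] at h2
  have hv1 : (i.rev : ℕ) = n - ((i : ℕ) + 1) := Fin.val_rev i
  have hv2 : ((f i).rev : ℕ) = n - (((f i) : ℕ) + 1) := Fin.val_rev (f i)
  have hi := i.isLt
  have hfi := (f i).isLt
  apply Fin.ext
  omega

lemma qocc_refl (σ : QPerm) : QOcc σ σ :=
  ⟨id, strictMono_id, fun _ _ => Iff.rfl, fun _ _ _ => rfl⟩

lemma qocc_trans {σ τ π : QPerm} (h1 : QOcc σ τ) (h2 : QOcc τ π) : QOcc σ π := by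
  obtain ⟨f, hf1, hf2, hf3⟩ := h1
  obtain ⟨g, hg1, hg2, hg3⟩ := h2
  refine ⟨g ∘ f, hg1.comp hf1, fun i j => (hf2 i j).trans (hg2 _ _), ?_⟩
  intro i h hqa
  have hi0 : i ≠ 0 := qa_false_ne hqa
  have hfi := hf3 i h hqa
  set a := f ⟨i, Nat.lt_of_succ_lt h⟩ with ha
  have hlt : (a : ℕ) + 1 < τ.1 := hfi ▸ (f ⟨i + 1, h⟩).isLt
  have hE : f ⟨i + 1, h⟩ = ⟨(a : ℕ) + 1, hlt⟩ := Fin.ext hfi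
  have hane : (a : ℕ) ≠ 0 := by
    have : i ≤ (a : ℕ) := fin_le_apply' hf1 i (Nat.lt_of_succ_lt h)
    omega
  have hkey := hg3 (a : ℕ) hlt (qa_eq_false hane)
  have haeta : (⟨(a : ℕ), Nat.lt_of_succ_lt hlt⟩ : Fin τ.1) = a := Fin.ext rfl
  simp only [Function.comp_apply, hE, hkey, haeta]
  rfl

lemma qle_to_qocc {σ τ : QPerm} (h : QLe σ τ) : QOcc σ τ := by
  induction h with
  | refl => exact qocc_refl σ
  | tail _ hcov ih => exact qocc_trans ih hcov.2

/-- Deletion of the entry at position `p` from a permutation. -/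
def delPerm {m : ℕ} (t : Equiv.Perm (Fin (m + 1))) (p : Fin (m + 1)) :
    Equiv.Perm (Fin m) :=
  ((finSuccAboveOrderIso p).toEquiv.trans
      (t.subtypeEquiv fun x =>
        not_congr ⟨fun h => by rw [h], fun h => t.injective h⟩)).trans
    (finSuccAboveOrderIso (t p)).symm.toEquiv

lemma delPerm_lt_iff {m : ℕ} (t : Equiv.Perm (Fin (m + 1))) (p : Fin (m + 1))
    (i j : Fin m) :
    delPerm t p i < delPerm t p j ↔ t (p.succAbove i) < t (p.succAbove j) := by
  show (finSuccAboveOrderIso (t p)).symm ⟨t (p.succAbove i), _⟩ <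
      (finSuccAboveOrderIso (t p)).symm ⟨t (p.succAbove j), _⟩ ↔ _
  rw [(finSuccAboveOrderIso (t p)).symm.lt_iff_lt]
  exact Subtype.mk_lt_mk

lemma del_cov {m : ℕ} (t : Equiv.Perm (Fin (m + 1))) (p : Fin (m + 1))
    (hp : (p : ℕ) = 0 ∨ (p : ℕ) = 1 ∨ (p : ℕ) = m) :
    QCov ⟨m, delPerm t p⟩ ⟨m + 1, t⟩ := by
  have hocc : IsOcc qa (delPerm t p) t p.succAbove := by
    refine ⟨Fin.strictMono_succAbove p, fun i j => delPerm_lt_iff t p i j, ?_⟩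
    intro i h hqa
    have hi0 : i ≠ 0 := qa_false_ne hqa
    rw [succAbove_val, succAbove_val]
    simp only
    split_ifs <;> omega
  exact ⟨rfl, p.succAbove, hocc⟩

lemma occ_del {k m : ℕ} (s : Equiv.Perm (Fin k)) (t : Equiv.Perm (Fin (m + 1)))
    (f : Fin k → Fin (m + 1)) (hocc : IsOcc qa s t f) (p : Fin (m + 1))
    (hne : ∀ j, (f j : ℕ) ≠ (p : ℕ)) :
    ∃ f' : Fin k → Fin m, IsOcc qa s (delPerm t p) f' := by
  obtain ⟨hf1, hf2, hf3⟩ := hocc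
  set f' : Fin k → Fin m :=
    fun j => (finSuccAboveOrderIso p).symm ⟨f j, fun h => hne j (congrArg Fin.val h)⟩
      with hf'
  have hsa : ∀ j, p.succAbove (f' j) = f j := by
    intro j
    have := (finSuccAboveOrderIso p).apply_symm_apply
      ⟨f j, fun h => hne j (congrArg Fin.val h)⟩
    have h2 : (finSuccAboveOrderIso p) (f' j) =
        ⟨f j, fun h => hne j (congrArg Fin.val h)⟩ := this
    rw [finSuccAboveOrderIso_apply] at h2
    exact congrArg Subtype.val h2
  have hv : ∀ j, (f' j : ℕ) =
      if (f j : ℕ) < (p : ℕ) then (f j : ℕ) else (f j : ℕ) - 1 := by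
    intro j
    have h1 : ((p.succAbove (f' j)) : ℕ) = (f j : ℕ) := congrArg Fin.val (hsa j)
    rw [succAbove_val] at h1
    have := hne j
    split_ifs at h1 ⊢ <;> omega
  have hmono : StrictMono f' := by
    intro a b hab
    have := hf1 hab
    rw [← (Fin.strictMono_succAbove p).lt_iff_lt, hsa a, hsa b]
    exact this
  refine ⟨f', hmono, ?_, ?_⟩
  · intro i j
    rw [hf2 i j, delPerm_lt_iff, hsa i, hsa j]
  · intro i h hqa
    have hi0 : i ≠ 0 := qa_false_ne hqa
    have hadj := hf3 i h hqa
    have h1 := hv ⟨i + 1, h⟩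
    have h2 := hv ⟨i, Nat.lt_of_succ_lt h⟩
    have h3 := hne ⟨i + 1, h⟩
    have h4 := hne ⟨i, Nat.lt_of_succ_lt h⟩
    have h5 : i ≤ (f ⟨i, Nat.lt_of_succ_lt h⟩ : ℕ) := fin_le_apply' hf1 i (Nat.lt_of_succ_lt h)
    split_ifs at h1 h2 <;> omega

lemma occ_index_vals {k n : ℕ} {f : Fin k → Fin n} (hk2 : 1 < k)
    (hadj : ∀ (i : ℕ) (h : i + 1 < k), qa (i + 1) = false →
      (f ⟨i + 1, h⟩ : ℕ) = (f ⟨i, Nat.lt_of_succ_lt h⟩ : ℕ) + 1) :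
    ∀ i (hik : i < k), 1 ≤ i → (f ⟨i, hik⟩ : ℕ) = (f ⟨1, hk2⟩ : ℕ) + (i - 1) := by
  intro i
  induction i with
  | zero => omega
  | succ j ihj =>
    intro hik h1
    rcases Nat.eq_zero_or_pos j with hj0 | hj1
    · subst hj0; simp
    · have hadj' := hadj j hik (qa_eq_false (by omega))
      have := ihj (Nat.lt_of_succ_lt hik) hj1
      omega

lemma qocc_to_qle : ∀ (n k : ℕ) (t : Equiv.Perm (Fin n)) (s : Equiv.Perm (Fin k)),
    (∃ f : Fin k → Fin n, IsOcc qa s t f) → QLe ⟨k, s⟩ ⟨n, t⟩ := by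
  intro n
  induction n using Nat.strong_induction_on with
  | _ n IH =>
    rintro k t s ⟨f, hf1, hf2, hf3⟩
    have hkn : k ≤ n := by
      by_contra hc
      push_neg at hc
      have h1 : n ≤ (f ⟨n, hc⟩ : ℕ) := fin_le_apply' hf1 n hc
      have := (f ⟨n, hc⟩).isLt
      omega
    rcases eq_or_lt_of_le hkn with heq | hlt
    · -- k = n : σ = τ
      subst heq
      have hid : ∀ i, f i = i := fin_strictMono_id hf1
      have hu : StrictMono (fun x : Fin k => t (s.symm x)) := by
        intro a b hab
        have h1 : s (s.symm a) < s (s.symm b) := by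
          rwa [Equiv.apply_symm_apply, Equiv.apply_symm_apply]
        have h2 := (hf2 (s.symm a) (s.symm b)).mp h1
        rwa [hid, hid] at h2
      have hst : s = t := by
        refine Equiv.ext fun y => ?_
        have := fin_strictMono_id hu (s y)
        simp only [Equiv.symm_apply_apply] at this
        exact this.symm
      subst hst
      exact Relation.ReflTransGen.refl
    · -- k < n : delete an entry
      obtain ⟨m, rfl⟩ : ∃ m, n = m + 1 := ⟨n - 1, by omega⟩
      -- choose the position p to delete
      have hmain : ∃ p : Fin (m + 1),
          ((p : ℕ) = 0 ∨ (p : ℕ) = 1 ∨ (p : ℕ) = m) ∧ ∀ j, (f j : ℕ) ≠ (p : ℕ) := by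
        by_cases hk0 : k = 0
        · exact ⟨Fin.last m, Or.inr (Or.inr (Fin.val_last m)),
            fun j => absurd j.isLt (by omega)⟩
        · have hk1 : 0 < k := Nat.pos_of_ne_zero hk0
          have hkk : k - 1 < k := by omega
          have hmax : ∀ j : Fin k, (f j : ℕ) ≤ (f ⟨k - 1, hkk⟩ : ℕ) := by
            intro j
            refine hf1.monotone (Fin.le_def.mpr ?_)
            have := j.isLt
            show (j : ℕ) ≤ k - 1
            omega
          by_cases hL : (f ⟨k - 1, hkk⟩ : ℕ) < m
          · refine ⟨Fin.last m, Or.inr (Or.inr (Fin.val_last m)), fun j => ?_⟩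
            have := hmax j
            rw [Fin.val_last]
            omega
          · have hLm : (f ⟨k - 1, hkk⟩ : ℕ) = m := by
              have := (f ⟨k - 1, hkk⟩).isLt; omega
            by_cases h0 : (f ⟨0, hk1⟩ : ℕ) = 0
            · -- delete position 1
              have hk2 : 2 ≤ k := by
                by_contra hc
                have he : (⟨k - 1, hkk⟩ : Fin k) = ⟨0, hk1⟩ :=
                  Fin.ext (show k - 1 = 0 by omega)
                rw [he, h0] at hLm
                omega
              have h1k : 1 < k := by omega
              have hvals := occ_index_vals (f := f) h1k hf3
              have hf1ge : 2 ≤ (f ⟨1, h1k⟩ : ℕ) := by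
                by_contra hc
                push_neg at hc
                have hlt01 : (f ⟨0, hk1⟩ : ℕ) < (f ⟨1, h1k⟩ : ℕ) :=
                  hf1 (Fin.lt_def.mpr (show (0 : ℕ) < 1 by omega))
                have hv2 := hvals (k - 1) hkk (by omega)
                omega
              have hm1 : 1 < m + 1 := by omega
              refine ⟨⟨1, hm1⟩, Or.inr (Or.inl rfl), fun j => ?_⟩
              show (f j : ℕ) ≠ 1
              rcases Nat.eq_zero_or_pos (j : ℕ) with hj0 | hj1
              · have hje : j = ⟨0, hk1⟩ := Fin.ext hj0
                rw [hje, h0]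
                omega
              · have h2 : (f ⟨1, h1k⟩ : ℕ) ≤ (f j : ℕ) :=
                  hf1.monotone (Fin.le_def.mpr (show (1 : ℕ) ≤ (j : ℕ) from hj1))
                omega
            · -- delete position 0
              refine ⟨⟨0, by omega⟩, Or.inl rfl, fun j => ?_⟩
              have h2 : (f ⟨0, hk1⟩ : ℕ) ≤ (f j : ℕ) :=
                hf1.monotone (Fin.le_def.mpr (Nat.zero_le _))
              show (f j : ℕ) ≠ 0
              omega
      obtain ⟨p, hp, hne⟩ := hmain
      have hcov : QCov ⟨m, delPerm t p⟩ ⟨m + 1, t⟩ := del_cov t p hp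
      have hocc := occ_del s t f ⟨hf1, hf2, hf3⟩ p hne
      have hle : QLe ⟨k, s⟩ ⟨m, delPerm t p⟩ :=
        IH m (by omega) k (delPerm t p) s hocc
      exact hle.tail hcov

/-- For `a = (1,0,0,…)`: `σ ≤ τ` in the quasi-consecutive pattern poset iff
there is an occurrence of `σ` in `τ` all of whose entries are adjacent in
`τ` except possibly the first and the second. -/
theorem qle_iff_qocc (σ τ : QPerm) : QLe σ τ ↔ QOcc σ τ :=
  ⟨qle_to_qocc, fun h => qocc_to_qle τ.1 σ.1 τ.2 σ.2 h⟩
end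

section
/- In the quasi-consecutive pattern poset, every permutation τ covers at most three permutations; moreover, any permutation covered by τ is obtained from τ by deleting either the first, the second, or the last entry of τ (and flattening). -/
open scoped Classical

private lemma qc_exists_missing {k n : ℕ} (h : k + 1 = n) (f : Fin k → Fin n) :
    ∃ q : Fin n, q ∉ Set.range f := by
  subst h
  by_contra hc
  push_neg at hc
  have hs : Function.Surjective f := fun q => hc q
  have := Fintype.card_le_of_surjective f hs
  simp at this

private lemma qc_range_eq {k n : ℕ} (h : k + 1 = n) (f : Fin k → Fin n)
    (hf : StrictMono f) (q : Fin n) (hq : q ∉ Set.range f) :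
    Set.range f = {q}ᶜ := by
  subst h
  apply Set.eq_of_subset_of_ncard_le
  · intro x hx
    rcases hx with ⟨i, rfl⟩
    simp only [Set.mem_compl_iff, Set.mem_singleton_iff]
    intro he
    exact hq ⟨i, he⟩
  · have h1 : (Set.range f).ncard = k := by
      rw [Set.ncard_eq_toFinset_card', Set.toFinset_range,
        Finset.card_image_of_injective _ hf.injective, Finset.card_univ, Fintype.card_fin]
    have h2 : ({q}ᶜ : Set (Fin (k + 1))).ncard = k := by
      rw [Set.ncard_eq_toFinset_card', Set.toFinset_compl, Set.toFinset_singleton,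
        Finset.card_compl]
      simp
    rw [h1, h2]
  · exact Set.toFinite _

private lemma qc_eq_succAbove {k n : ℕ} (h : k + 1 = n) (f : Fin k → Fin n)
    (hf : StrictMono f) (q : Fin n) (hq : q ∉ Set.range f) :
    ∀ i : Fin k, (f i : ℕ) = if (i : ℕ) < (q : ℕ) then (i : ℕ) else (i : ℕ) + 1 := by
  subst h
  have hr : Set.range f = Set.range q.succAbove :=
    (qc_range_eq rfl f hf q hq).trans (Fin.range_succAbove q).symm
  haveI : WellFoundedLT (Fin k) := inferInstance
  have hfe : f = q.succAbove := (StrictMono.range_inj hf (Fin.strictMono_succAbove q)).mp hr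
  intro i
  rw [hfe]
  rcases lt_or_ge ((i : ℕ)) ((q : ℕ)) with hlt | hle
  · rw [Fin.succAbove_of_castSucc_lt q i (by simpa [Fin.lt_def] using hlt)]
    simp [hlt]
  · rw [Fin.succAbove_of_le_castSucc q i (by simpa [Fin.le_def] using hle)]
    simp [Nat.not_lt.mpr hle]

/-- The missing position of a quasi-consecutive occurrence is 0, 1, or the last. -/
private lemma qc_missing_pos {k n : ℕ} (h : k + 1 = n) {π : Equiv.Perm (Fin k)}
    {ρ : Equiv.Perm (Fin n)} {f : Fin k → Fin n} (hocc : IsOcc qa π ρ f)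
    (q : Fin n) (hq : q ∉ Set.range f) :
    (q : ℕ) = 0 ∨ (q : ℕ) = 1 ∨ (q : ℕ) = k := by
  by_contra hcon
  push_neg at hcon
  obtain ⟨h0, h1, hk⟩ := hcon
  have hqk : (q : ℕ) < k := by
    have := q.isLt
    omega
  have hq2 : 2 ≤ (q : ℕ) := by omega
  have hval := qc_eq_succAbove h f hocc.1 q hq
  have hadj := hocc.2.2 ((q : ℕ) - 1) (by omega) (by simp [qa]; omega)
  have e1 := hval ⟨(q : ℕ) - 1 + 1, by omega⟩
  have e2 := hval ⟨(q : ℕ) - 1, by omega⟩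
  simp only at e1 e2
  rw [e1, e2] at hadj
  split_ifs at hadj <;> omega

private lemma qc_perm_eq {k : ℕ} (π₁ π₂ : Equiv.Perm (Fin k))
    (h : ∀ i j : Fin k, π₁ i < π₁ j ↔ π₂ i < π₂ j) : π₁ = π₂ := by
  have hsm : StrictMono (fun a => π₂ (π₁.symm a)) := by
    intro a b hab
    have : π₁ (π₁.symm a) < π₁ (π₁.symm b) := by simpa using hab
    exact (h _ _).mp this
  haveI : WellFoundedLT (Fin k) := inferInstance
  have hrange : Set.range (fun a => π₂ (π₁.symm a)) = Set.range (id : Fin k → Fin k) := by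
    rw [Set.range_id]
    apply Set.eq_univ_of_forall
    intro x
    exact ⟨π₁ (π₂.symm x), by simp⟩
  have hid : (fun a => π₂ (π₁.symm a)) = id := (StrictMono.range_inj hsm strictMono_id).mp hrange
  apply Equiv.ext
  intro x
  have := congrFun hid (π₁ x)
  simpa using this.symm

/-- Every `τ` covers at most three permutations in the quasi-consecutive
pattern poset, and any permutation covered by `τ` is obtained by deleting
the first, the second, or the last entry of `τ` (and flattening): it has an
occurrence in `τ` omitting only such a position. -/
theorem covers_at_most_three (τ : QPerm) :
    {σ : QPerm | QCov σ τ}.Finite ∧ {σ : QPerm | QCov σ τ}.ncard ≤ 3 ∧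
      ∀ σ : QPerm, QCov σ τ →
        ∃ f : Fin σ.1 → Fin τ.1, IsOcc qa σ.2 τ.2 f ∧
          ∀ q : Fin τ.1, q ∉ Set.range f →
            (q : ℕ) = 0 ∨ (q : ℕ) = 1 ∨ (q : ℕ) = τ.1 - 1 := by
  obtain ⟨n, ρ⟩ := τ
  -- finiteness
  have hfin : {σ : QPerm | QCov σ (⟨n, ρ⟩ : QPerm)}.Finite := by
    apply Set.Finite.subset (permsUpTo n).finite_toSet
    intro σ hσ
    have h1 : σ.1 + 1 = n := hσ.1
    simp only [Finset.coe_sigma, Set.mem_sigma_iff, permsUpTo, Finset.coe_range,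
      Set.mem_Iio, Finset.mem_coe]
    constructor
    · omega
    · exact Finset.mem_univ _
  refine ⟨hfin, ?_, ?_⟩
  · -- at most three
    have hle := Set.ncard_le_ncard_of_injOn
      (f := fun σ : QPerm =>
        if h : QCov σ (⟨n, ρ⟩ : QPerm) then
          (Classical.choose (qc_exists_missing h.1 (Classical.choose h.2))).val
        else 0)
      (s := {σ : QPerm | QCov σ (⟨n, ρ⟩ : QPerm)}) (t := {0, 1, n - 1})
      ?_ ?_ (Set.toFinite _)
    · refine hle.trans ?_
      refine (Set.ncard_insert_le _ _).trans ?_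
      have := Set.ncard_insert_le (1 : ℕ) ({n - 1} : Set ℕ)
      simp only [Set.ncard_singleton] at this ⊢
      omega
    · intro σ hσ
      simp only [Set.mem_setOf_eq] at hσ
      dsimp only
      rw [dif_pos hσ]
      have hf := Classical.choose_spec hσ.2
      have hq := Classical.choose_spec (qc_exists_missing hσ.1 (Classical.choose hσ.2))
      have := qc_missing_pos hσ.1 hf _ hq
      have h1 : σ.1 + 1 = n := hσ.1
      simp only [Set.mem_insert_iff, Set.mem_singleton_iff]
      omega
    · rintro ⟨k₁, π₁⟩ hx ⟨k₂, π₂⟩ hy hxy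
      simp only [Set.mem_setOf_eq] at hx hy
      have hk₁ : k₁ + 1 = n := hx.1
      have hk₂ : k₂ + 1 = n := hy.1
      obtain rfl : k₁ = k₂ := by omega
      dsimp only at hxy
      rw [dif_pos hx, dif_pos hy] at hxy
      set f₁ := Classical.choose hx.2 with hf₁def
      set f₂ := Classical.choose hy.2 with hf₂def
      have hocc₁ : IsOcc qa π₁ ρ f₁ := Classical.choose_spec hx.2
      have hocc₂ : IsOcc qa π₂ ρ f₂ := Classical.choose_spec hy.2
      set q₁ := Classical.choose (qc_exists_missing hx.1 f₁) with hq₁def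
      set q₂ := Classical.choose (qc_exists_missing hy.1 f₂) with hq₂def
      have hq₁ : q₁ ∉ Set.range f₁ := Classical.choose_spec (qc_exists_missing hx.1 f₁)
      have hq₂ : q₂ ∉ Set.range f₂ := Classical.choose_spec (qc_exists_missing hy.1 f₂)
      have hv₁ := qc_eq_succAbove hx.1 f₁ hocc₁.1 q₁ hq₁
      have hv₂ := qc_eq_succAbove hy.1 f₂ hocc₂.1 q₂ hq₂
      have hfeq : f₁ = f₂ := by
        funext i
        apply Fin.ext
        rw [hv₁ i, hv₂ i, hxy]
      have hpeq : π₁ = π₂ := by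
        apply qc_perm_eq
        intro i j
        rw [hocc₁.2.1 i j, hocc₂.2.1 i j, hfeq]
      rw [hpeq]
  · -- the deletion positions
    intro σ hσ
    obtain ⟨hlen, f, hocc⟩ := hσ
    refine ⟨f, hocc, ?_⟩
    intro q hq
    have := qc_missing_pos hlen hocc q hq
    have h1 : σ.1 + 1 = n := hlen
    omega
end

section
/- In the quasi-consecutive pattern poset, if a permutation τ covers precisely one permutation, then τ is monotone (either increasing or decreasing), and consequently for any σ ≤ τ the interval [σ, τ] is a chain. -/
open scoped Classical

lemma strictMono_fin_eq_id {n : ℕ} (f : Fin n → Fin n) (hf : StrictMono f) : ∀ i, f i = i := by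
  have hsurj : Function.Surjective f := Finite.surjective_of_injective hf.injective
  set e := StrictMono.orderIsoOfSurjective f hf hsurj with he
  have h2 : e = OrderIso.refl (Fin n) := Subsingleton.elim _ _
  intro i
  have h3 : e i = i := by rw [h2]; rfl
  exact h3

noncomputable def patternOf {k n : ℕ} (v : Fin k → Fin n) (hv : Function.Injective v) :
    Equiv.Perm (Fin k) :=
  Equiv.ofBijective
    (fun i => (Finset.orderIsoOfFin (Finset.image v Finset.univ)
        (by rw [Finset.card_image_of_injective _ hv, Finset.card_univ, Fintype.card_fin])).symm
      ⟨v i, Finset.mem_image_of_mem _ (Finset.mem_univ i)⟩)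
    (Finite.injective_iff_bijective.mp (fun i j hij => by
      have h2 : (⟨v i, Finset.mem_image_of_mem _ (Finset.mem_univ i)⟩ :
          {x // x ∈ Finset.image v Finset.univ}) =
          ⟨v j, Finset.mem_image_of_mem _ (Finset.mem_univ j)⟩ :=
        (Finset.orderIsoOfFin _ _).symm.injective hij
      exact hv (congrArg Subtype.val h2)))

lemma patternOf_lt_iff {k n : ℕ} (v : Fin k → Fin n) (hv : Function.Injective v) (i j : Fin k) :
    patternOf v hv i < patternOf v hv j ↔ v i < v j := by
  simp only [patternOf, Equiv.ofBijective_apply]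
  rw [OrderIso.lt_iff_lt]
  exact Iff.rfl

/-- The increasing permutation of length `n`. -/
def incP (n : ℕ) : QPerm := ⟨n, 1⟩

/-- The decreasing permutation of length `n`. -/
def decP (n : ℕ) : QPerm := ⟨n, Fin.revPerm⟩

def IncQ (τ : QPerm) : Prop := ∀ i j : Fin τ.1, i < j → τ.2 i < τ.2 j

def DecQ (τ : QPerm) : Prop := ∀ i j : Fin τ.1, i < j → τ.2 j < τ.2 i

lemma incQ_eq (τ : QPerm) (h : IncQ τ) : τ = incP τ.1 := by
  obtain ⟨n, t⟩ := τ
  have ht : StrictMono t := fun i j hij => h i j hij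
  have : t = 1 := Equiv.ext (strictMono_fin_eq_id t ht)
  simp only [incP, this]

lemma decQ_eq (τ : QPerm) (h : DecQ τ) : τ = decP τ.1 := by
  obtain ⟨n, t⟩ := τ
  have ht : StrictMono (fun i => t (Fin.rev i)) := by
    intro i j hij
    exact h _ _ (Fin.rev_lt_rev.mpr hij)
  have h2 : ∀ i, t (Fin.rev i) = i := strictMono_fin_eq_id _ ht
  have : t = Fin.revPerm := by
    refine Equiv.ext fun i => ?_
    have := h2 (Fin.rev i)
    rw [Fin.rev_rev] at this
    rw [this]; rfl
  simp only [decP, this]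

lemma qcov_inc (k : ℕ) : QCov (incP k) (incP (k + 1)) := by
  refine ⟨rfl, Fin.castSucc, Fin.strictMono_castSucc, fun i j => ?_, fun i h _ => ?_⟩
  · simp only [incP, Equiv.Perm.coe_one, id_eq]
    exact (Fin.castSucc_lt_castSucc_iff).symm
  · simp

lemma qcov_dec (k : ℕ) : QCov (decP k) (decP (k + 1)) := by
  refine ⟨rfl, Fin.castSucc, Fin.strictMono_castSucc, fun i j => ?_, fun i h _ => ?_⟩
  · simp only [decP, Fin.revPerm_apply]
    show Fin.rev (i : Fin k) < Fin.rev (j : Fin k) ↔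
      Fin.rev (Fin.castSucc (i : Fin k)) < Fin.rev (Fin.castSucc (j : Fin k))
    rw [Fin.rev_lt_rev, Fin.rev_lt_rev, Fin.castSucc_lt_castSucc_iff]
  · simp

lemma qle_inc {m l : ℕ} (h : m ≤ l) : QLe (incP m) (incP l) := by
  induction l, h using Nat.le_induction with
  | base => exact Relation.ReflTransGen.refl
  | succ l hml ih => exact Relation.ReflTransGen.tail ih (qcov_inc l)

lemma qle_dec {m l : ℕ} (h : m ≤ l) : QLe (decP m) (decP l) := by
  induction l, h using Nat.le_induction with
  | base => exact Relation.ReflTransGen.refl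
  | succ l hml ih => exact Relation.ReflTransGen.tail ih (qcov_dec l)

lemma incQ_of_qcov {σ τ : QPerm} (h : QCov σ τ) (hτ : IncQ τ) : IncQ σ := by
  obtain ⟨-, f, hf, hiso, -⟩ := h
  intro i j hij
  exact (hiso i j).mpr (hτ _ _ (hf hij))

lemma decQ_of_qcov {σ τ : QPerm} (h : QCov σ τ) (hτ : DecQ τ) : DecQ σ := by
  obtain ⟨-, f, hf, hiso, -⟩ := h
  intro i j hij
  exact (hiso j i).mpr (hτ _ _ (hf hij))

lemma incQ_of_qle {σ τ : QPerm} (h : QLe σ τ) (hτ : IncQ τ) : IncQ σ := by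
  induction h with
  | refl => exact hτ
  | tail hab hbc ih => exact ih (incQ_of_qcov hbc hτ)

lemma decQ_of_qle {σ τ : QPerm} (h : QLe σ τ) (hτ : DecQ τ) : DecQ σ := by
  induction h with
  | refl => exact hτ
  | tail hab hbc ih => exact ih (decQ_of_qcov hbc hτ)

lemma qchain_inc (τ : QPerm) (hτ : IncQ τ) (σ : QPerm) : QChain σ τ := by
  intro ρ₁ ρ₂ h₁ h₂
  have e1 : ρ₁ = incP ρ₁.1 := incQ_eq _ (incQ_of_qle h₁.2 hτ)
  have e2 : ρ₂ = incP ρ₂.1 := incQ_eq _ (incQ_of_qle h₂.2 hτ)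
  rcases le_total ρ₁.1 ρ₂.1 with hle | hle
  · left; rw [e1, e2]; exact qle_inc hle
  · right; rw [e1, e2]; exact qle_inc hle

lemma qchain_dec (τ : QPerm) (hτ : DecQ τ) (σ : QPerm) : QChain σ τ := by
  intro ρ₁ ρ₂ h₁ h₂
  have e1 : ρ₁ = decP ρ₁.1 := decQ_eq _ (decQ_of_qle h₁.2 hτ)
  have e2 : ρ₂ = decP ρ₂.1 := decQ_eq _ (decQ_of_qle h₂.2 hτ)
  rcases le_total ρ₁.1 ρ₂.1 with hle | hle
  · left; rw [e1, e2]; exact qle_dec hle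
  · right; rw [e1, e2]; exact qle_dec hle

/-- The two canonical covers: deleting the last, resp. the first, entry. -/
lemma unique_cover_key {m : ℕ} (t : Equiv.Perm (Fin (m + 1)))
    (h : ∃! σ : QPerm, QCov σ ⟨m + 1, t⟩) :
    ∀ i j : Fin m, (t i.castSucc < t j.castSucc ↔ t i.succ < t j.succ) := by
  have hv1 : Function.Injective (fun i : Fin m => t i.castSucc) :=
    fun i j hij => Fin.castSucc_injective _ (t.injective hij)
  have hv2 : Function.Injective (fun i : Fin m => t i.succ) :=
    fun i j hij => Fin.succ_injective _ (t.injective hij)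
  have hc1 : QCov ⟨m, patternOf _ hv1⟩ ⟨m + 1, t⟩ := by
    refine ⟨rfl, Fin.castSucc, Fin.strictMono_castSucc, fun i j => patternOf_lt_iff _ hv1 i j,
      fun i h _ => by simp⟩
  have hc2 : QCov ⟨m, patternOf _ hv2⟩ ⟨m + 1, t⟩ := by
    refine ⟨rfl, Fin.succ, Fin.strictMono_succ, fun i j => patternOf_lt_iff _ hv2 i j,
      fun i h _ => by simp⟩
  have heq : (⟨m, patternOf _ hv1⟩ : QPerm) = ⟨m, patternOf _ hv2⟩ :=
    (h.unique hc1 hc2)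
  have heq2 : patternOf _ hv1 = patternOf _ hv2 := eq_of_heq (Sigma.mk.inj_iff.mp heq).2
  intro i j
  rw [← patternOf_lt_iff _ hv1 i j, ← patternOf_lt_iff _ hv2 i j, heq2]

lemma mono_of_unique_cover {m : ℕ} (t : Equiv.Perm (Fin (m + 1)))
    (h : ∃! σ : QPerm, QCov σ ⟨m + 1, t⟩) :
    IncQ ⟨m + 1, t⟩ ∨ DecQ ⟨m + 1, t⟩ := by
  have key := unique_cover_key t h
  match m with
  | 0 =>
    left
    intro i j hij
    have hi : (i : ℕ) < 1 := i.isLt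
    have hj : (j : ℕ) < 1 := j.isLt
    have hlt : (i : ℕ) < (j : ℕ) := hij
    omega
  | Nat.succ m' =>
    by_cases ha : t ⟨0, by omega⟩ < t ⟨1, by omega⟩
    · left
      have all : ∀ i : ℕ, ∀ hi : i + 1 < m' + 1 + 1,
          t ⟨i, Nat.lt_of_succ_lt hi⟩ < t ⟨i + 1, hi⟩ := by
        intro i
        induction i with
        | zero => intro hi; exact ha
        | succ i ih =>
          intro hi
          have hi' : i + 1 < m' + 1 + 1 := Nat.lt_of_succ_lt hi
          have h1 := ih hi'
          have hm : i < m' + 1 := by omega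
          have hm2 : i + 1 < m' + 1 := by omega
          have hk := key ⟨i, hm⟩ ⟨i + 1, hm2⟩
          exact hk.mp h1
      have hsm : StrictMono t := by
        rw [Fin.strictMono_iff_lt_succ]
        intro i
        exact all i.val (by omega)
      exact fun i j hij => hsm hij
    · right
      have hne : t ⟨0, by omega⟩ ≠ t ⟨1, by omega⟩ := fun e => by
        have := t.injective e
        simp [Fin.mk.injEq] at this
      have hd : t ⟨1, by omega⟩ < t ⟨0, by omega⟩ :=
        lt_of_le_of_ne (not_lt.mp ha) (Ne.symm hne)
      have all : ∀ i : ℕ, ∀ hi : i + 1 < m' + 1 + 1,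
          t ⟨i + 1, hi⟩ < t ⟨i, Nat.lt_of_succ_lt hi⟩ := by
        intro i
        induction i with
        | zero => intro hi; exact hd
        | succ i ih =>
          intro hi
          have hi' : i + 1 < m' + 1 + 1 := Nat.lt_of_succ_lt hi
          have h1 := ih hi'
          have hm : i < m' + 1 := by omega
          have hm2 : i + 1 < m' + 1 := by omega
          have hk := key ⟨i + 1, hm2⟩ ⟨i, hm⟩
          exact hk.mp h1
      have hsm : StrictMono (fun i => Fin.rev (t i)) := by
        rw [Fin.strictMono_iff_lt_succ]
        intro i
        exact Fin.rev_lt_rev.mpr (all i.val (by omega))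
      exact fun i j hij => Fin.rev_lt_rev.mp (hsm hij)

/-- If `τ` covers precisely one permutation in the quasi-consecutive pattern
poset, then `τ` is monotone, and every interval `[σ, τ]` is a chain. -/
theorem covers_one_implies_monotone_and_chain (τ : QPerm)
    (h : ∃! σ : QPerm, QCov σ τ) :
    IsMonotonePerm τ ∧ ∀ σ : QPerm, QLe σ τ → QChain σ τ := by
  obtain ⟨n, t⟩ := τ
  match n with
  | 0 =>
    obtain ⟨σ, ⟨hlen, -⟩, -⟩ := h
    exact absurd hlen (Nat.succ_ne_zero _)
  | Nat.succ m =>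
    have hmono := mono_of_unique_cover t h
    constructor
    · exact hmono.imp (fun h' => h') (fun h' => h')
    · intro σ hσ
      rcases hmono with h' | h'
      · exact qchain_inc _ h' σ
      · exact qchain_dec _ h' σ
end

section
/- In the quasi-consecutive pattern poset, let τ = a_1 a_2 ⋯ a_n. If τ covers precisely two permutations, then either a_1 and a_2 are consecutive integers (|a_1 − a_2| = 1), or τ = 1 n (n−1) ⋯ 3 2, or τ = n 1 2 ⋯ (n−1). -/
open scoped Classical

namespace QCAux

variable {m : ℕ}

/-- chain propagation -/
lemma chain_iff (P : ℕ → Prop) (a b : ℕ)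
    (h : ∀ i, a ≤ i → i + 1 ≤ b → (P i ↔ P (i + 1))) :
    ∀ j, a ≤ j → j ≤ b → (P a ↔ P j) := by
  intro j
  induction j with
  | zero =>
    intro h1 _
    have h2 : a = 0 := by omega
    rw [h2]
  | succ k ih =>
    intro h1 h2
    rcases Nat.eq_or_lt_of_le h1 with h3 | h3
    · rw [h3]
    · exact (ih (by omega) (by omega)).trans (h k (by omega) h2)

lemma gap_incr (v : ℕ → ℕ) (a b : ℕ)
    (h : ∀ i, a ≤ i → i + 1 ≤ b → v i < v (i + 1)) :
    ∀ i j, a ≤ i → i ≤ j → j ≤ b → v i + (j - i) ≤ v j := by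
  intro i j
  induction j with
  | zero =>
    intro _ h2 _
    obtain rfl : i = 0 := by omega
    simp
  | succ k ih =>
    intro h1 h2 h3
    rcases Nat.eq_or_lt_of_le h2 with h4 | h4
    · rw [h4]
      omega
    · have h5 := ih h1 (by omega) (by omega)
      have h6 := h k (by omega) (by omega)
      omega

lemma gap_decr (v : ℕ → ℕ) (a b : ℕ)
    (h : ∀ i, a ≤ i → i + 1 ≤ b → v (i + 1) < v i) :
    ∀ i j, a ≤ i → i ≤ j → j ≤ b → v j + (j - i) ≤ v i := by
  intro i j
  induction j with
  | zero =>
    intro _ h2 _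
    obtain rfl : i = 0 := by omega
    simp
  | succ k ih =>
    intro h1 h2 h3
    rcases Nat.eq_or_lt_of_le h2 with h4 | h4
    · rw [h4]
      omega
    · have h5 := ih h1 (by omega) (by omega)
      have h6 := h k (by omega) (by omega)
      omega

def delE (τ : Equiv.Perm (Fin (m+1))) (p : Fin (m+1)) : Option (Fin m) ≃ Option (Fin m) :=
  (finSuccEquiv' p).symm.trans (τ.trans (finSuccEquiv' (τ p)))

def del (τ : Equiv.Perm (Fin (m+1))) (p : Fin (m+1)) : Equiv.Perm (Fin m) :=
  Equiv.removeNone (delE τ p)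

lemma del_spec (τ : Equiv.Perm (Fin (m+1))) (p : Fin (m+1)) (i : Fin m) :
    τ (p.succAbove i) = (τ p).succAbove (del τ p i) := by
  have h1 : delE τ p (some i) = some ((delE τ p).removeNone i) := by
    refine (Equiv.removeNone_some _ ?_).symm
    rcases h : delE τ p (some i) with _ | x
    · exfalso
      have h0 : delE τ p none = none := by simp [delE]
      have := (delE τ p).injective (h.trans h0.symm)
      simp at this
    · exact ⟨x, rfl⟩
  have h2 : delE τ p (some i) = finSuccEquiv' (τ p) (τ (p.succAbove i)) := by
    simp [delE, finSuccEquiv'_symm_some]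
  rw [h2] at h1
  have := congrArg (finSuccEquiv' (τ p)).symm h1
  simpa [finSuccEquiv'_symm_some, del] using this

lemma del_lt_iff (τ : Equiv.Perm (Fin (m+1))) (p : Fin (m+1)) (i j : Fin m) :
    del τ p i < del τ p j ↔ τ (p.succAbove i) < τ (p.succAbove j) := by
  rw [del_spec, del_spec, Fin.succAbove_lt_succAbove_iff]

lemma coe_succAbove (p : Fin (m+1)) (i : Fin m) :
    (p.succAbove i : ℕ) = if (i:ℕ) < (p:ℕ) then (i:ℕ) else (i:ℕ)+1 := by
  rcases lt_or_ge (Fin.castSucc i) p with h | h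
  · have h' : (i:ℕ) < (p:ℕ) := by simpa [Fin.lt_iff_val_lt_val] using h
    rw [Fin.succAbove_of_castSucc_lt _ _ h, if_pos h']
    simp
  · have h' : ¬ (i:ℕ) < (p:ℕ) := by
      simp only [Fin.le_iff_val_le_val, Fin.coe_castSucc] at h
      omega
    rw [Fin.succAbove_of_le_castSucc _ _ h, if_neg h']
    simp

/-- values of τ as a ℕ-sequence -/
def VV (τ : Equiv.Perm (Fin (m+1))) : ℕ → ℕ :=
  fun i => if h : i < m + 1 then ((τ ⟨i, h⟩ : Fin (m+1)) : ℕ) else 0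

lemma VV_apply (τ : Equiv.Perm (Fin (m+1))) (i : Fin (m+1)) :
    VV τ (i : ℕ) = (τ i : ℕ) := by
  simp [VV, i.isLt, Fin.eta]

lemma VV_le (τ : Equiv.Perm (Fin (m+1))) (i : ℕ) : VV τ i ≤ m := by
  unfold VV
  split
  · exact Fin.is_le _
  · omega

lemma VV_inj (τ : Equiv.Perm (Fin (m+1))) {i j : ℕ} (hi : i ≤ m) (hj : j ≤ m)
    (h : VV τ i = VV τ j) : i = j := by
  simp only [VV, dif_pos (by omega : i < m + 1), dif_pos (by omega : j < m + 1)] at h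
  have := τ.injective (Fin.ext h)
  simpa using this

lemma VV_surj (τ : Equiv.Perm (Fin (m+1))) {v : ℕ} (hv : v ≤ m) :
    ∃ j ≤ m, VV τ j = v := by
  refine ⟨(τ.symm ⟨v, by omega⟩ : ℕ), Fin.is_le _, ?_⟩
  rw [VV_apply]
  simp

lemma del_lt_iff_nat (τ : Equiv.Perm (Fin (m+1))) (p : Fin (m+1)) {i j : ℕ}
    (hi : i < m) (hj : j < m) :
    (del τ p ⟨i, hi⟩ < del τ p ⟨j, hj⟩ ↔
      VV τ (if i < (p:ℕ) then i else i+1) < VV τ (if j < (p:ℕ) then j else j+1)) := by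
  rw [del_lt_iff, Fin.lt_iff_val_lt_val,
    ← VV_apply τ (p.succAbove ⟨i, hi⟩), ← VV_apply τ (p.succAbove ⟨j, hj⟩),
    coe_succAbove, coe_succAbove]


lemma false_of_del_eq_01 (T : Equiv.Perm (Fin (m+1))) (hm : 1 ≤ m)
    (p q : Fin (m+1)) (hp : (p:ℕ) = 0) (hq : (q:ℕ) = 1)
    (h1 : VV T 0 + 1 ≠ VV T 1 ∧ VV T 1 + 1 ≠ VV T 0)
    (hEq : del T p = del T q) : False := by
  have hle0 := VV_le T 0
  have hle1 := VV_le T 1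
  have h01 : VV T 0 ≠ VV T 1 := fun hh => by
    have := VV_inj T (by omega) hm hh
    omega
  have hvle : min (VV T 0) (VV T 1) + 1 ≤ m := by omega
  obtain ⟨k, hk, hkv⟩ := VV_surj T hvle
  have hk0 : k ≠ 0 := by
    intro hh
    rw [hh] at hkv
    omega
  have hk1 : k ≠ 1 := by
    intro hh
    rw [hh] at hkv
    omega
  have h0m : (0:ℕ) < m := by omega
  have hkm : k - 1 < m := by omega
  have hks : k - 1 + 1 = k := by omega
  have e1 := del_lt_iff_nat T p h0m hkm
  have e2 := del_lt_iff_nat T q h0m hkm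
  rw [hp] at e1
  rw [hq] at e2
  simp only [show ¬ (0:ℕ) < 0 by omega, if_neg, if_false, show (0:ℕ) < 1 by omega, if_true,
    show ¬ k - 1 < 0 by omega, show ¬ k - 1 < 1 by omega, hks, if_pos, zero_add] at e1 e2
  rw [hEq] at e1
  have iff1 := e1.symm.trans e2
  omega

lemma false_of_del_eq_0l (T : Equiv.Perm (Fin (m+1))) (hm : 1 ≤ m)
    (p q : Fin (m+1)) (hp : (p:ℕ) = 0) (hq : (q:ℕ) = m)
    (h1 : VV T 0 + 1 ≠ VV T 1 ∧ VV T 1 + 1 ≠ VV T 0)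
    (hEq : del T p = del T q) : False := by
  have H : ∀ i j : ℕ, i < m → j < m → (VV T (i+1) < VV T (j+1) ↔ VV T i < VV T j) := by
    intro i j hi hj
    have e1 := del_lt_iff_nat T p hi hj
    have e2 := del_lt_iff_nat T q hi hj
    rw [hp] at e1
    rw [hq] at e2
    simp only [show ¬ i < 0 by omega, show ¬ j < 0 by omega, if_neg, if_false,
      if_pos hi, if_pos hj] at e1 e2
    rw [hEq] at e1
    exact e1.symm.trans e2
  have HC := chain_iff (fun i => VV T i < VV T (i+1)) 0 (m-1)
    (fun i _ h2 => (H i (i+1) (by omega) (by omega)).symm)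
  by_cases hC : VV T 0 < VV T 1
  · have hstep : ∀ i, 0 ≤ i → i + 1 ≤ m → VV T i < VV T (i+1) := by
      intro i _ hi
      exact (HC i (by omega) (by omega)).mp hC
    have g := gap_incr (VV T) 0 m hstep
    have a := g 0 1 (by omega) (by omega) (by omega)
    have b := g 1 m (by omega) (by omega) (by omega)
    have c := VV_le T m
    omega
  · have hstep : ∀ i, 0 ≤ i → i + 1 ≤ m → VV T (i+1) < VV T i := by
      intro i _ hi
      have hiff := HC i (by omega) (by omega)
      have hne : VV T i ≠ VV T (i+1) := fun hh => by
        have := VV_inj T (by omega) (by omega) hh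
        omega
      norm_num at hiff
      omega
    have g := gap_decr (VV T) 0 m hstep
    have a := g 0 1 (by omega) (by omega) (by omega)
    have b := g 1 m (by omega) (by omega) (by omega)
    have c := VV_le T 0
    omega

lemma false_of_del_eq_1l (T : Equiv.Perm (Fin (m+1))) (hm : 2 ≤ m)
    (p q : Fin (m+1)) (hp : (p:ℕ) = 1) (hq : (q:ℕ) = m)
    (h1 : VV T 0 + 1 ≠ VV T 1 ∧ VV T 1 + 1 ≠ VV T 0)
    (h2 : ¬ ∀ i ≤ m, VV T i = if i = 0 then 0 else (m+1) - i)
    (h3 : ¬ ∀ i ≤ m, VV T i = if i = 0 then m else i - 1)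
    (hEq : del T p = del T q) : False := by
  have HA : ∀ i j : ℕ, 1 ≤ i → 1 ≤ j → i < m → j < m →
      (VV T (i+1) < VV T (j+1) ↔ VV T i < VV T j) := by
    intro i j hi1 hj1 hi hj
    have e1 := del_lt_iff_nat T p hi hj
    have e2 := del_lt_iff_nat T q hi hj
    rw [hp] at e1
    rw [hq] at e2
    simp only [show ¬ i < 1 by omega, show ¬ j < 1 by omega, if_neg, if_false,
      if_pos hi, if_pos hj] at e1 e2
    rw [hEq] at e1
    exact e1.symm.trans e2
  have HB : ∀ j : ℕ, 1 ≤ j → j < m → (VV T 0 < VV T (j+1) ↔ VV T 0 < VV T j) := by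
    intro j hj1 hj
    have h0m : (0:ℕ) < m := by omega
    have e1 := del_lt_iff_nat T p h0m hj
    have e2 := del_lt_iff_nat T q h0m hj
    rw [hp] at e1
    rw [hq] at e2
    simp only [show (0:ℕ) < 1 by omega, show (0:ℕ) < m by omega, if_pos,
      show ¬ j < 1 by omega, if_neg, if_false, if_pos hj] at e1 e2
    rw [hEq] at e1
    exact e1.symm.trans e2
  have HBchain := chain_iff (fun j => VV T 0 < VV T j) 1 m
    (fun j hj1 hj2 => (HB j hj1 (by omega)).symm)
  have HCchain := chain_iff (fun i => VV T i < VV T (i+1)) 1 (m-1)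
    (fun i hi1 hi2 => (HA i (i+1) hi1 (by omega) (by omega) (by omega)).symm)
  by_cases hP : VV T 0 < VV T 1
  · have hmin : ∀ j, 1 ≤ j → j ≤ m → VV T 0 < VV T j := by
      intro j a b
      exact (HBchain j a b).mp hP
    have h00 : VV T 0 = 0 := by
      by_contra hz
      obtain ⟨j, hj, hjv⟩ := VV_surj T (show (0:ℕ) ≤ m by omega)
      have hj0 : j ≠ 0 := fun hh => by
        rw [hh] at hjv
        exact hz hjv
      have := hmin j (by omega) hj
      omega
    by_cases hC : VV T 1 < VV T 2
    · have hstep : ∀ i, 0 ≤ i → i + 1 ≤ m → VV T i < VV T (i+1) := by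
        intro i _ hi
        rcases Nat.eq_zero_or_pos i with rfl | hpos
        · exact hP
        · exact (HCchain i hpos (by omega)).mp hC
      have g := gap_incr (VV T) 0 m hstep
      have a := g 0 1 (by omega) (by omega) (by omega)
      have b := g 1 m (by omega) (by omega) (by omega)
      have c := VV_le T m
      omega
    · have hstep : ∀ i, 1 ≤ i → i + 1 ≤ m → VV T (i+1) < VV T i := by
        intro i hi1 hi
        have hiff := HCchain i hi1 (by omega)
        have hne : VV T i ≠ VV T (i+1) := fun hh => by
          have := VV_inj T (by omega) (by omega) hh
          omega
        norm_num at hiff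
        omega
      have g := gap_decr (VV T) 1 m hstep
      apply h2
      intro i him
      rcases Nat.eq_zero_or_pos i with rfl | hpos
      · simpa using h00
      · rw [if_neg (by omega)]
        have a := g 1 i (by omega) hpos him
        have b := g i m hpos him (by omega)
        have c := VV_le T 1
        have d : VV T m ≠ 0 := fun hh => by
          have := VV_inj T (by omega) (by omega) (hh.trans h00.symm)
          omega
        omega
  · have h10 : VV T 1 < VV T 0 := by
      have hne : VV T 1 ≠ VV T 0 := fun hh => by
        have := VV_inj T (by omega) (by omega) hh
        omega
      omega
    have hmax : ∀ j, 1 ≤ j → j ≤ m → VV T j < VV T 0 := by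
      intro j a b
      have hiff := HBchain j a b
      have hne : VV T j ≠ VV T 0 := fun hh => by
        have := VV_inj T (by omega) (by omega) hh
        omega
      norm_num at hiff
      omega
    have h0m : VV T 0 = m := by
      by_contra hz
      obtain ⟨j, hj, hjv⟩ := VV_surj T (le_refl m)
      have hj0 : j ≠ 0 := fun hh => by
        rw [hh] at hjv
        exact hz hjv
      have := hmax j (by omega) hj
      have := VV_le T 0
      omega
    by_cases hC : VV T 1 < VV T 2
    · have hstep : ∀ i, 1 ≤ i → i + 1 ≤ m → VV T i < VV T (i+1) := by
        intro i hpos hi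
        exact (HCchain i hpos (by omega)).mp hC
      have g := gap_incr (VV T) 1 m hstep
      apply h3
      intro i him
      rcases Nat.eq_zero_or_pos i with rfl | hpos
      · simpa using h0m
      · rw [if_neg (by omega)]
        have a := g 1 i (by omega) hpos him
        have b := g i m hpos him (by omega)
        have c := VV_le T m
        have d : VV T m ≠ m := fun hh => by
          have := VV_inj T (by omega) (by omega) (hh.trans h0m.symm)
          omega
        omega
    · have hstep : ∀ i, 1 ≤ i → i + 1 ≤ m → VV T (i+1) < VV T i := by
        intro i hi1 hi
        have hiff := HCchain i hi1 (by omega)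
        have hne : VV T i ≠ VV T (i+1) := fun hh => by
          have := VV_inj T (by omega) (by omega) hh
          omega
        norm_num at hiff
        omega
      have g := gap_decr (VV T) 1 m hstep
      have a := g 1 m (by omega) (by omega) (by omega)
      omega

lemma qcov_del (T : Equiv.Perm (Fin (m+1))) (p : Fin (m+1)) (hp : (p:ℕ) ≤ 1 ∨ (p:ℕ) = m) :
    QCov ⟨m, del T p⟩ ⟨m+1, T⟩ := by
  refine ⟨rfl, p.succAbove, Fin.strictMono_succAbove p, fun i j => del_lt_iff T p i j, ?_⟩
  intro i h hfalse
  have hi1 : i ≠ 0 := by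
    intro hh
    rw [hh] at hfalse
    simp [qa] at hfalse
  have hk : i + 1 < m := h
  rw [coe_succAbove, coe_succAbove]
  show (if i + 1 < (p:ℕ) then i + 1 else (i+1)+1) = (if i < (p:ℕ) then i else i+1) + 1
  split_ifs <;> omega


end QCAux

/-- If `τ = a₁a₂⋯aₙ` covers precisely two permutations in the
quasi-consecutive pattern poset, then either `a₁` and `a₂` are consecutive
integers, or `τ = 1 n (n-1) ⋯ 3 2`, or `τ = n 1 2 ⋯ (n-1)`. -/
theorem covers_two_characterization (τ : QPerm) (hn : 2 ≤ τ.1)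
    (h : {σ : QPerm | QCov σ τ}.ncard = 2) :
    (∀ i j : Fin τ.1, (i : ℕ) = 0 → (j : ℕ) = 1 →
        (τ.2 i : ℕ) + 1 = (τ.2 j : ℕ) ∨ (τ.2 j : ℕ) + 1 = (τ.2 i : ℕ)) ∨
    (∀ i : Fin τ.1, (τ.2 i : ℕ) = if (i : ℕ) = 0 then 0 else τ.1 - (i : ℕ)) ∨
    (∀ i : Fin τ.1, (τ.2 i : ℕ) = if (i : ℕ) = 0 then τ.1 - 1 else (i : ℕ) - 1) := by
  obtain ⟨n, T⟩ := τ
  have hn0 : 2 ≤ n := hn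
  obtain ⟨m, rfl⟩ : ∃ m, n = m + 1 := ⟨n - 1, by omega⟩
  have hn' : 2 ≤ m + 1 := hn0
  dsimp only at h ⊢
  rcases Nat.lt_or_ge m 2 with hm | hm
  · left
    intro i j hi hj
    have hij : i ≠ j := by
      intro hh
      rw [hh] at hi
      omega
    have hTij : (T i : ℕ) ≠ (T j : ℕ) := by
      intro hh
      exact hij (T.injective (Fin.ext hh))
    have b1 : (T i : ℕ) < m + 1 := (T i).isLt
    have b2 : (T j : ℕ) < m + 1 := (T j).isLt
    omega
  · by_contra hcon
    push_neg at hcon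
    obtain ⟨hc1, hc2, hc3⟩ := hcon
    obtain ⟨i0, j0, hi0, hj0, hne1, hne2⟩ := hc1
    have hv0 : QCAux.VV T 0 = (T i0 : ℕ) := by
      have := QCAux.VV_apply T i0
      rwa [hi0] at this
    have hv1 : QCAux.VV T 1 = (T j0 : ℕ) := by
      have := QCAux.VV_apply T j0
      rwa [hj0] at this
    have h1V : QCAux.VV T 0 + 1 ≠ QCAux.VV T 1 ∧ QCAux.VV T 1 + 1 ≠ QCAux.VV T 0 := by
      constructor <;> omega
    have h2V : ¬ ∀ i ≤ m, QCAux.VV T i = if i = 0 then 0 else (m+1) - i := by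
      intro hall
      obtain ⟨i, hi⟩ := hc2
      apply hi
      have hv := hall (i : ℕ) (Fin.is_le i)
      rw [QCAux.VV_apply] at hv
      rw [hv]
    have h3V : ¬ ∀ i ≤ m, QCAux.VV T i = if i = 0 then m else i - 1 := by
      intro hall
      obtain ⟨i, hi⟩ := hc3
      apply hi
      have hv := hall (i : ℕ) (Fin.is_le i)
      rw [QCAux.VV_apply] at hv
      rw [hv]
      split_ifs <;> omega
    have hS : {σ : QPerm | QCov σ ⟨m+1, T⟩}.Finite := by
      by_contra hinf
      have := Set.Infinite.ncard hinf
      omega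
    have cov0 := QCAux.qcov_del T ⟨0, by omega⟩ (Or.inl (show (0:ℕ) ≤ 1 by omega))
    have cov1 := QCAux.qcov_del T ⟨1, by omega⟩ (Or.inl (show (1:ℕ) ≤ 1 by omega))
    have covl := QCAux.qcov_del T ⟨m, by omega⟩ (Or.inr rfl)
    have d01 : (⟨m, QCAux.del T ⟨0, by omega⟩⟩ : QPerm) ≠ ⟨m, QCAux.del T ⟨1, by omega⟩⟩ := by
      intro hh
      injection hh with ha hb
      exact QCAux.false_of_del_eq_01 T (by omega) ⟨0, by omega⟩ ⟨1, by omega⟩ rfl rfl h1V hb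
    have d0l : (⟨m, QCAux.del T ⟨0, by omega⟩⟩ : QPerm) ≠ ⟨m, QCAux.del T ⟨m, by omega⟩⟩ := by
      intro hh
      injection hh with ha hb
      exact QCAux.false_of_del_eq_0l T (by omega) ⟨0, by omega⟩ ⟨m, by omega⟩ rfl rfl h1V hb
    have d1l : (⟨m, QCAux.del T ⟨1, by omega⟩⟩ : QPerm) ≠ ⟨m, QCAux.del T ⟨m, by omega⟩⟩ := by
      intro hh
      injection hh with ha hb
      exact QCAux.false_of_del_eq_1l T hm ⟨1, by omega⟩ ⟨m, by omega⟩ rfl rfl h1V h2V h3V hb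
    have hsub : ({⟨m, QCAux.del T ⟨0, by omega⟩⟩, ⟨m, QCAux.del T ⟨1, by omega⟩⟩,
        ⟨m, QCAux.del T ⟨m, by omega⟩⟩} : Set QPerm) ⊆ {σ : QPerm | QCov σ ⟨m+1, T⟩} := by
      intro x hx
      simp only [Set.mem_insert_iff, Set.mem_singleton_iff] at hx
      rcases hx with rfl | rfl | rfl
      exacts [cov0, cov1, covl]
    have h3card : ({⟨m, QCAux.del T ⟨0, by omega⟩⟩, ⟨m, QCAux.del T ⟨1, by omega⟩⟩,
        ⟨m, QCAux.del T ⟨m, by omega⟩⟩} : Set QPerm).ncard = 3 :=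
      Set.ncard_eq_three.mpr ⟨_, _, _, d01, d0l, d1l, rfl⟩
    have hle := Set.ncard_le_ncard hsub hS
    omega
end

section
/- In the quasi-consecutive pattern poset, if σ ≤ τ, σ occurs precisely once in τ, and that occurrence involves exactly two of the three entries a_1, a_2, a_n of τ = a_1 a_2 ⋯ a_n, then the interval [σ, τ] is a chain; hence μ(σ, τ) = −1 if length(σ) = n − 1 and μ(σ, τ) = 0 if length(σ) < n − 1. -/
open scoped Classical

section QCAux

lemma qc_sm_gap {m n : ℕ} {g : Fin m → Fin n} (hg : StrictMono g) :
    ∀ (d : ℕ) (i j : Fin m), (j : ℕ) = (i : ℕ) + d → (g i : ℕ) + d ≤ (g j : ℕ) := by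
  intro d
  induction d with
  | zero =>
    intro i j hj
    have : j = i := Fin.ext (by omega)
    subst this
    omega
  | succ d ih =>
    intro i j hj
    have hjm : (j : ℕ) < m := j.2
    obtain ⟨j', hjv⟩ : ∃ j' : Fin m, (j' : ℕ) = (i : ℕ) + d := ⟨⟨(i : ℕ) + d, by omega⟩, rfl⟩
    have h1 := ih i j' hjv
    have h2 : j' < j := by rw [Fin.lt_def]; omega
    have h3 := hg h2
    rw [Fin.lt_def] at h3
    omega

lemma qc_sm_ge {m n : ℕ} {g : Fin m → Fin n} (hg : StrictMono g) (y : Fin m) :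
    (y : ℕ) ≤ (g y : ℕ) := by
  obtain ⟨i, hi⟩ : ∃ i : Fin m, (i : ℕ) = 0 :=
    ⟨⟨0, Nat.lt_of_le_of_lt (Nat.zero_le _) y.2⟩, rfl⟩
  have := qc_sm_gap hg (y : ℕ) i y (by omega)
  omega

lemma qc_strictMono_fin_id {m : ℕ} {f : Fin m → Fin m} (hf : StrictMono f) (x : Fin m) :
    f x = x := by
  have h1 := qc_sm_ge hf x
  have hx : (x : ℕ) < m := x.2
  obtain ⟨t, ht⟩ : ∃ t : Fin m, (t : ℕ) = m - 1 := ⟨⟨m - 1, by omega⟩, rfl⟩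
  have h2 := qc_sm_gap hf ((m - 1) - (x : ℕ)) x t (by omega)
  have h3 : (f t : ℕ) < m := (f t).2
  exact Fin.ext (by omega)

lemma qc_perm_eq_of_pattern {m : ℕ} (π₁ π₂ : Equiv.Perm (Fin m))
    (h : ∀ i j : Fin m, π₁ i < π₁ j ↔ π₂ i < π₂ j) : π₁ = π₂ := by
  have hsm : StrictMono (fun x => π₂ (π₁.symm x)) := by
    intro a b hab
    exact (h (π₁.symm a) (π₁.symm b)).1 (by simpa using hab)
  ext x
  have := qc_strictMono_fin_id hsm (π₁ x)
  simp only [Equiv.symm_apply_apply] at this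
  exact congrArg Fin.val this.symm

lemma qc_qle_len {σ τ : QPerm} (h : QLe σ τ) : σ.1 ≤ τ.1 := by
  have h' : Relation.ReflTransGen (VCov qa) σ τ := h
  clear h
  induction h' with
  | refl => exact le_rfl
  | tail hab hbc ih => have := hbc.1; omega

lemma qc_qle_len_eq {σ τ : QPerm} (h : QLe σ τ) (hlen : σ.1 = τ.1) : σ = τ := by
  have h' : Relation.ReflTransGen (VCov qa) σ τ := h
  rcases Relation.ReflTransGen.cases_head h' with h | ⟨c, hc, hrest⟩
  · exact h
  · exfalso
    have h1 := hc.1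
    have h2 := qc_qle_len (show QLe c τ from hrest)
    omega

lemma qc_exists_mid {τ : QPerm} :
    ∀ {σ : QPerm}, QLe σ τ → ∀ ℓ : ℕ, σ.1 ≤ ℓ → ℓ ≤ τ.1 →
      ∃ z : QPerm, QLe σ z ∧ QLe z τ ∧ z.1 = ℓ := by
  intro σ h
  have h' : Relation.ReflTransGen (VCov qa) σ τ := h
  clear h
  induction h' using Relation.ReflTransGen.head_induction_on with
  | refl =>
    intro ℓ h1 h2
    exact ⟨τ, Relation.ReflTransGen.refl, Relation.ReflTransGen.refl, by omega⟩
  | @head a c hac hrest ih =>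
    intro ℓ h1 h2
    rcases eq_or_lt_of_le h1 with he | hlt
    · exact ⟨a, Relation.ReflTransGen.refl, Relation.ReflTransGen.head hac hrest, he⟩
    · have hc1 := hac.1
      obtain ⟨z, hz1, hz2, hz3⟩ := ih ℓ (by omega) h2
      exact ⟨z, Relation.ReflTransGen.head hac hz1, hz2, hz3⟩

end QCAux

section QCAux2

lemma qc_isOcc_refl {k : ℕ} (π : Equiv.Perm (Fin k)) : IsOcc qa π π id :=
  ⟨strictMono_id, fun _ _ => Iff.rfl, fun _ _ _ => rfl⟩

lemma qc_isOcc_comp {k m n : ℕ} {σ : Equiv.Perm (Fin k)} {ρ : Equiv.Perm (Fin m)}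
    {τ : Equiv.Perm (Fin n)} {h : Fin k → Fin m} {g : Fin m → Fin n}
    (hh : IsOcc qa σ ρ h) (hg : IsOcc qa ρ τ g) : IsOcc qa σ τ (g ∘ h) := by
  refine ⟨hg.1.comp hh.1, fun i j => (hh.2.1 i j).trans (hg.2.1 _ _), ?_⟩
  intro i hik hqa
  have hi0 : i ≠ 0 := by intro h0; subst h0; simp [qa] at hqa
  have hstep := hh.2.2 i hik hqa
  set x : Fin k := ⟨i, Nat.lt_of_succ_lt hik⟩ with hxdef
  set x' : Fin k := ⟨i + 1, hik⟩ with hxdef'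
  have hx1 : 1 ≤ (h x : ℕ) := by
    have h0x : (⟨0, Nat.lt_of_le_of_lt (Nat.zero_le _) hik⟩ : Fin k) < x := by
      rw [Fin.lt_def]
      exact Nat.pos_of_ne_zero hi0
    have := hh.1 h0x
    rw [Fin.lt_def] at this
    omega
  have hlt : (h x : ℕ) + 1 < m := by
    have := (h x').2
    omega
  have hgadj := hg.2.2 (h x : ℕ) hlt (by simp [qa]; omega)
  have e1 : (⟨(h x : ℕ) + 1, hlt⟩ : Fin m) = h x' :=
    Fin.ext (show (h x : ℕ) + 1 = (h x' : ℕ) by omega)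
  have e2 : (⟨(h x : ℕ), Nat.lt_of_succ_lt hlt⟩ : Fin m) = h x := Fin.ext rfl
  rw [e1, e2] at hgadj
  exact hgadj

lemma qc_qle_occ {σ τ : QPerm} (h : QLe σ τ) :
    ∃ f : Fin σ.1 → Fin τ.1, IsOcc qa σ.2 τ.2 f := by
  have h' : Relation.ReflTransGen (VCov qa) σ τ := h
  clear h
  induction h' with
  | refl => exact ⟨id, qc_isOcc_refl σ.2⟩
  | tail hab hbc ih =>
    obtain ⟨h1, hh1⟩ := ih
    obtain ⟨g, hgg⟩ := hbc.2
    exact ⟨g ∘ h1, qc_isOcc_comp hh1 hgg⟩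

lemma qc_occ_blockD {m n : ℕ} {π : Equiv.Perm (Fin m)} {τ2 : Equiv.Perm (Fin n)}
    {g : Fin m → Fin n} (hg : IsOcc qa π τ2 g) :
    ∀ (i j : Fin m), 1 ≤ (i : ℕ) → ∀ d : ℕ, (j : ℕ) = (i : ℕ) + d →
      (g j : ℕ) = (g i : ℕ) + d := by
  intro i j hi d
  induction d generalizing j with
  | zero =>
    intro hj
    have : j = i := Fin.ext (by omega)
    subst this
    omega
  | succ d ih =>
    intro hj
    have hjv : (j : ℕ) < m := j.2
    obtain ⟨j', hj'⟩ : ∃ j' : Fin m, (j' : ℕ) = (i : ℕ) + d := ⟨⟨(i : ℕ) + d, by omega⟩, rfl⟩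
    have h1 := ih j' hj'
    have hlt : (j' : ℕ) + 1 < m := by omega
    have hadj := hg.2.2 (j' : ℕ) hlt (by simp [qa]; omega)
    have e1 : (⟨(j' : ℕ) + 1, hlt⟩ : Fin m) = j := Fin.ext (show (j' : ℕ) + 1 = (j : ℕ) by omega)
    have e2 : (⟨(j' : ℕ), Nat.lt_of_succ_lt hlt⟩ : Fin m) = j' := Fin.ext rfl
    rw [e1, e2] at hadj
    omega

lemma qc_top_det {m n : ℕ} {g : Fin m → Fin n} (hg : StrictMono g) {y : Fin m}
    (hy : (g y : ℕ) = n - 1) : ∀ p : Fin m, (p : ℕ) = m - 1 → (g p : ℕ) = n - 1 := by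
  intro p hp
  have h0 : (y : ℕ) < m := y.2
  have h1 := qc_sm_gap hg ((p : ℕ) - (y : ℕ)) y p (by omega)
  have h2 : (g p : ℕ) < n := (g p).2
  omega

lemma qc_block_det {m n : ℕ} {π : Equiv.Perm (Fin m)} {τ2 : Equiv.Perm (Fin n)}
    {g : Fin m → Fin n} (hg : IsOcc qa π τ2 g)
    (htop : ∀ p : Fin m, (p : ℕ) = m - 1 → (g p : ℕ) = n - 1) :
    ∀ p : Fin m, 1 ≤ (p : ℕ) → (g p : ℕ) = n - m + (p : ℕ) := by
  intro p hp
  have hpm : (p : ℕ) < m := p.2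
  obtain ⟨pt, hpt⟩ : ∃ pt : Fin m, (pt : ℕ) = m - 1 := ⟨⟨m - 1, by omega⟩, rfl⟩
  have h1 := qc_occ_blockD hg p pt hp ((m - 1) - (p : ℕ)) (by omega)
  have h2 := htop pt hpt
  have h3 := qc_sm_ge hg.1 pt
  have h4 : (g p : ℕ) < n := (g p).2
  omega

lemma qc_gvalA {k m n : ℕ} {σ2 : Equiv.Perm (Fin k)} {π : Equiv.Perm (Fin m)}
    {τ2 : Equiv.Perm (Fin n)} {f : Fin k → Fin n} {g : Fin m → Fin n} {h : Fin k → Fin m}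
    (hg : IsOcc qa π τ2 g) (hh : IsOcc qa σ2 π h)
    (hcomp : ∀ j, g (h j) = f j)
    {x0 x1 : Fin k} (hx0 : (f x0 : ℕ) = 0) (hx1v : (x1 : ℕ) = 1) (hx1 : (f x1 : ℕ) = 1) :
    ∀ p : Fin m, (g p : ℕ) = (p : ℕ) := by
  intro p
  have hgx0 : (g (h x0) : ℕ) = 0 := by rw [hcomp x0]; exact hx0
  have hgx1 : (g (h x1) : ℕ) = 1 := by rw [hcomp x1]; exact hx1
  have hhx1a : 1 ≤ (h x1 : ℕ) := by have := qc_sm_ge hh.1 x1; omega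
  have hhx1b : (h x1 : ℕ) ≤ 1 := by have := qc_sm_ge hg.1 (h x1); omega
  by_cases hp : (p : ℕ) = 0
  · have h1 := qc_sm_ge hg.1 (h x0)
    have : p = h x0 := Fin.ext (by omega)
    rw [this]
    omega
  · have hb := qc_occ_blockD hg (h x1) p (by omega) ((p : ℕ) - 1) (by omega)
    omega

lemma qc_gvalB {k m n : ℕ} {σ2 : Equiv.Perm (Fin k)} {π : Equiv.Perm (Fin m)}
    {τ2 : Equiv.Perm (Fin n)} {f : Fin k → Fin n} {g : Fin m → Fin n} {h : Fin k → Fin m}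
    (hg : IsOcc qa π τ2 g) (hh : IsOcc qa σ2 π h)
    (hcomp : ∀ j, g (h j) = f j)
    {x0 xk : Fin k} (hx0 : (f x0 : ℕ) = 0) (hxk : (f xk : ℕ) = n - 1) :
    ∀ p : Fin m, (g p : ℕ) = if (p : ℕ) = 0 then 0 else n - m + (p : ℕ) := by
  intro p
  have hgx0 : (g (h x0) : ℕ) = 0 := by rw [hcomp x0]; exact hx0
  have hgxk : (g (h xk) : ℕ) = n - 1 := by rw [hcomp xk]; exact hxk
  have htop := qc_top_det hg.1 hgxk
  by_cases hp : (p : ℕ) = 0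
  · rw [if_pos hp]
    have h1 := qc_sm_ge hg.1 (h x0)
    have : p = h x0 := Fin.ext (by omega)
    rw [this]
    omega
  · rw [if_neg hp]
    exact qc_block_det hg htop p (by omega)

lemma qc_gvalC {k m n : ℕ} {σ2 : Equiv.Perm (Fin k)} {π : Equiv.Perm (Fin m)}
    {τ2 : Equiv.Perm (Fin n)} {f : Fin k → Fin n} {g : Fin m → Fin n} {h : Fin k → Fin m}
    (hg : IsOcc qa π τ2 g) (hh : IsOcc qa σ2 π h)
    (hcomp : ∀ j, g (h j) = f j)
    {x1 xk : Fin k} (hx1 : (f x1 : ℕ) = 1) (hxk : (f xk : ℕ) = n - 1) (hm2 : 2 ≤ m) :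
    ∀ p : Fin m, (g p : ℕ) =
      if (p : ℕ) = 0 then (if m = n then 0 else 1) else n - m + (p : ℕ) := by
  have hgx1 : (g (h x1) : ℕ) = 1 := by rw [hcomp x1]; exact hx1
  have hgxk : (g (h xk) : ℕ) = n - 1 := by rw [hcomp xk]; exact hxk
  have htop := qc_top_det hg.1 hgxk
  have hblock := qc_block_det hg htop
  obtain ⟨pt, hpt⟩ : ∃ pt : Fin m, (pt : ℕ) = m - 1 := ⟨⟨m - 1, by omega⟩, rfl⟩
  have hnm : m ≤ n := by
    have h1 := htop pt hpt
    have h2 := qc_sm_ge hg.1 pt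
    have h3 : (g pt : ℕ) < n := (g pt).2
    omega
  by_cases hy : (h x1 : ℕ) = 0
  · have hmn : m ≠ n := by
      intro hmneq
      obtain ⟨p1, hp1⟩ : ∃ p1 : Fin m, (p1 : ℕ) = 1 := ⟨⟨1, by omega⟩, rfl⟩
      have hb := hblock p1 (by omega)
      have hlt : h x1 < p1 := by rw [Fin.lt_def]; omega
      have := hg.1 hlt
      rw [Fin.lt_def] at this
      omega
    intro p
    by_cases hp : (p : ℕ) = 0
    · rw [if_pos hp, if_neg hmn]
      have : p = h x1 := Fin.ext (by omega)
      rw [this]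
      exact hgx1
    · rw [if_neg hp]
      exact hblock p (by omega)
  · have h1 := hblock (h x1) (by omega)
    have hmn : m = n := by omega
    have hhx1 : (h x1 : ℕ) = 1 := by omega
    intro p
    by_cases hp : (p : ℕ) = 0
    · rw [if_pos hp, if_pos hmn]
      have hlt : p < h x1 := by rw [Fin.lt_def]; omega
      have := hg.1 hlt
      rw [Fin.lt_def] at this
      omega
    · rw [if_neg hp]
      exact hblock p (by omega)

end QCAux2

section QCAux3

lemma qc_mem_permsUpTo {n : ℕ} {z : QPerm} : z ∈ permsUpTo n ↔ z.1 ≤ n := by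
  obtain ⟨l, p⟩ := z
  simp [permsUpTo, Finset.mem_sigma, Nat.lt_succ_iff]

lemma qc_qMuAux_self : ∀ (m : ℕ) (σ : QPerm), qMuAux m σ σ = 1 := by
  intro m σ
  cases m <;> simp [qMuAux]

lemma qc_qMuAux_stable : ∀ (d m : ℕ), d ≤ m → ∀ σ z : QPerm, z.1 ≤ σ.1 + d →
    qMuAux m σ z = qMuAux d σ z := by
  intro d
  induction d with
  | zero =>
    intro m _ σ z hz
    cases m with
    | zero => rfl
    | succ m' =>
      by_cases h : σ = z
      · rw [h, qc_qMuAux_self, qc_qMuAux_self]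
      · have hempty : ∀ z' ∈ (permsUpTo z.1).filter (fun z' => QLe σ z' ∧ QLe z' z ∧ z' ≠ z),
            qMuAux m' σ z' = 0 := by
          intro z' hz'
          simp only [Finset.mem_filter] at hz'
          exfalso
          obtain ⟨_, hz1, hz2, hz3⟩ := hz'
          have l1 := qc_qle_len hz1
          have l2 := qc_qle_len hz2
          exact hz3 (qc_qle_len_eq hz2 (by omega))
        simp only [qMuAux]
        rw [if_neg h, Finset.sum_eq_zero hempty, neg_zero, if_neg h]
  | succ d ih =>
    intro m hm σ z hz
    obtain ⟨m', rfl⟩ : ∃ m', m = m' + 1 := ⟨m - 1, by omega⟩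
    by_cases h : σ = z
    · rw [h, qc_qMuAux_self, qc_qMuAux_self]
    · simp only [qMuAux]
      rw [if_neg h, if_neg h]
      congr 1
      apply Finset.sum_congr rfl
      intro z' hz'
      simp only [Finset.mem_filter] at hz'
      obtain ⟨_, hz1, hz2, hz3⟩ := hz'
      have l2 := qc_qle_len hz2
      have hlt : z'.1 < z.1 := lt_of_le_of_ne l2 (fun he => hz3 (qc_qle_len_eq hz2 he))
      exact ih m' (by omega) σ z' (by omega)

lemma qc_qMuAux_eq_qMu {m : ℕ} {σ z : QPerm} (h : z.1 ≤ m) : qMuAux m σ z = qMu σ z := by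
  unfold qMu
  rw [qc_qMuAux_stable z.1 m h σ z (by omega)]

lemma qc_qMu_self (σ : QPerm) : qMu σ σ = 1 := qc_qMuAux_self _ _

lemma qc_qMu_cover {σ τ : QPerm} (hle : QLe σ τ) (hlen : σ.1 + 1 = τ.1) : qMu σ τ = -1 := by
  have hne : σ ≠ τ := fun h => by rw [h] at hlen; omega
  unfold qMu
  rw [← hlen]
  simp only [qMuAux]
  rw [if_neg hne]
  rw [Finset.sum_eq_single σ]
  · rw [qc_qMuAux_self]
  · intro b hb hbne
    exfalso
    simp only [Finset.mem_filter] at hb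
    obtain ⟨hb0, hb1, hb2, hb3⟩ := hb
    have l1 := qc_qle_len hb1
    have l2 := qc_qle_len hb2
    apply hbne
    by_cases hbl : b.1 = σ.1
    · exact (qc_qle_len_eq hb1 hbl.symm).symm
    · exact absurd (qc_qle_len_eq hb2 (by omega)) hb3
  · intro hσ
    exfalso
    apply hσ
    simp only [Finset.mem_filter]
    exact ⟨qc_mem_permsUpTo.2 (by omega), Relation.ReflTransGen.refl, hle, hne⟩

lemma qc_qchain_mono {σ τ z : QPerm} (h : QChain σ τ) (hz : QLe z τ) : QChain σ z := by
  intro ρ₁ ρ₂ h₁ h₂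
  exact h ρ₁ ρ₂ ⟨h₁.1, Relation.ReflTransGen.trans h₁.2 hz⟩
    ⟨h₂.1, Relation.ReflTransGen.trans h₂.2 hz⟩

lemma qc_chain_unique {σ τ z₁ z₂ : QPerm} (hc : QChain σ τ) (h₁ : z₁ ∈ QInterval σ τ)
    (h₂ : z₂ ∈ QInterval σ τ) (hl : z₁.1 = z₂.1) : z₁ = z₂ := by
  rcases hc z₁ z₂ h₁ h₂ with h | h
  · exact qc_qle_len_eq h hl
  · exact (qc_qle_len_eq h hl.symm).symm

lemma qc_qchain_of_uniq {σ τ : QPerm}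
    (uniq : ∀ ρ₁ ρ₂ : QPerm, ρ₁ ∈ QInterval σ τ → ρ₂ ∈ QInterval σ τ → ρ₁.1 = ρ₂.1 → ρ₁ = ρ₂) :
    QChain σ τ := by
  intro ρ₁ ρ₂ h₁ h₂
  rcases le_total ρ₁.1 ρ₂.1 with hl | hl
  · obtain ⟨z, hz1, hz2, hz3⟩ := qc_exists_mid h₂.1 ρ₁.1 (qc_qle_len h₁.1) hl
    have hz : z = ρ₁ := uniq z ρ₁ ⟨hz1, Relation.ReflTransGen.trans hz2 h₂.2⟩ h₁ hz3
    exact Or.inl (hz ▸ hz2)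
  · obtain ⟨z, hz1, hz2, hz3⟩ := qc_exists_mid h₁.1 ρ₂.1 (qc_qle_len h₂.1) hl
    have hz : z = ρ₂ := uniq z ρ₂ ⟨hz1, Relation.ReflTransGen.trans hz2 h₁.2⟩ h₂ hz3
    exact Or.inr (hz ▸ hz2)

lemma qc_qMu_chain_zero : ∀ (N : ℕ) (σ τ : QPerm), τ.1 ≤ N → QLe σ τ → QChain σ τ →
    σ.1 + 2 ≤ τ.1 → qMu σ τ = 0 := by
  intro N
  induction N with
  | zero => intro σ τ h1 _ _ h4; omega
  | succ N ih =>
    intro σ τ hN hle hchain hlen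
    have hne : σ ≠ τ := fun h => by rw [h] at hlen; omega
    obtain ⟨m', hm'⟩ : ∃ m', τ.1 = m' + 1 := ⟨τ.1 - 1, by omega⟩
    unfold qMu
    rw [hm']
    simp only [qMuAux]
    rw [if_neg hne]
    obtain ⟨w, hw1, hw2, hw3⟩ := qc_exists_mid hle (σ.1 + 1) (by omega) (by omega)
    have hwτ : w ≠ τ := fun h => by rw [h] at hw3; omega
    have hσw : σ ≠ w := fun h => by rw [← h] at hw3; omega
    set S := (permsUpTo τ.1).filter (fun z => QLe σ z ∧ QLe z τ ∧ z ≠ τ) with hSdef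
    have hmemS : ∀ z : QPerm, z ∈ S ↔ (z.1 ≤ τ.1 ∧ QLe σ z ∧ QLe z τ ∧ z ≠ τ) := by
      intro z
      rw [hSdef, Finset.mem_filter, qc_mem_permsUpTo]
    have hval : ∀ z ∈ S, qMuAux m' σ z =
        (if z = σ then 1 else if z.1 = σ.1 + 1 then -1 else 0 : ℤ) := by
      intro z hz
      rw [hmemS] at hz
      obtain ⟨hz1, hz2, hz3, hz4⟩ := hz
      have hzlen : z.1 < τ.1 := lt_of_le_of_ne (qc_qle_len hz3) (fun h => hz4 (qc_qle_len_eq hz3 h))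
      rw [qc_qMuAux_eq_qMu (by omega)]
      by_cases h1 : z = σ
      · rw [if_pos h1, h1]
        exact qc_qMu_self σ
      · rw [if_neg h1]
        by_cases hz2' : z.1 = σ.1 + 1
        · rw [if_pos hz2']
          exact qc_qMu_cover hz2 hz2'.symm
        · rw [if_neg hz2']
          have hσz : σ.1 ≤ z.1 := qc_qle_len hz2
          have hσz2 : σ.1 ≠ z.1 := fun h => h1 (qc_qle_len_eq hz2 h).symm
          exact ih σ z (by omega) hz2 (qc_qchain_mono hchain hz3) (by omega)
    rw [Finset.sum_congr rfl hval]
    have hsub : ({σ, w} : Finset QPerm) ⊆ S := by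
      intro z hz
      rcases Finset.mem_insert.1 hz with rfl | hz
      · rw [hmemS]
        exact ⟨by omega, Relation.ReflTransGen.refl, hle, hne⟩
      · rw [Finset.mem_singleton] at hz
        subst hz
        rw [hmemS]
        exact ⟨by omega, hw1, hw2, hwτ⟩
    have hzero : ∀ z ∈ S, z ∉ ({σ, w} : Finset QPerm) →
        (if z = σ then 1 else if z.1 = σ.1 + 1 then -1 else 0 : ℤ) = 0 := by
      intro z hz hzn
      simp only [Finset.mem_insert, Finset.mem_singleton, not_or] at hzn
      obtain ⟨hz1, hz2⟩ := hzn
      rw [if_neg hz1]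
      by_cases h2 : z.1 = σ.1 + 1
      · exfalso
        rw [hmemS] at hz
        exact hz2 (qc_chain_unique hchain ⟨hz.2.1, hz.2.2.1⟩ ⟨hw1, hw2⟩ (by omega))
      · rw [if_neg h2]
    rw [← Finset.sum_subset hsub hzero, Finset.sum_pair hσw]
    rw [if_pos rfl, if_neg (Ne.symm hσw), if_pos hw3]
    norm_num

end QCAux3

/-- If `σ` occurs precisely once in `τ = a₁a₂⋯aₙ` and the unique occurrence
involves exactly two of the three entries `a₁, a₂, aₙ`, then `[σ, τ]` is a
chain; hence `μ(σ,τ) = -1` if `σ` has length `n - 1` and `μ(σ,τ) = 0` if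
`σ` has length `< n - 1`. -/
theorem unique_occurrence_two_of_three (σ τ : QPerm) (hle : QLe σ τ)
    (f : Fin σ.1 → Fin τ.1) (hf : IsOcc qa σ.2 τ.2 f)
    (huniq : ∀ g : Fin σ.1 → Fin τ.1, IsOcc qa σ.2 τ.2 g → g = f)
    (h2 : (Involves f 0 ∧ Involves f 1 ∧ ¬ Involves f (τ.1 - 1)) ∨
          (Involves f 0 ∧ ¬ Involves f 1 ∧ Involves f (τ.1 - 1)) ∨
          (¬ Involves f 0 ∧ Involves f 1 ∧ Involves f (τ.1 - 1))) :
    QChain σ τ ∧ (σ.1 + 1 = τ.1 → qMu σ τ = -1) ∧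
      (σ.1 + 1 < τ.1 → qMu σ τ = 0) := by
  have hchain : QChain σ τ := by
    by_cases hστ : σ = τ
    · intro ρ₁ ρ₂ h₁ h₂
      left
      exact Relation.ReflTransGen.trans h₁.2 (by rw [← hστ]; exact h₂.1)
    · have hkn : σ.1 < τ.1 :=
        lt_of_le_of_ne (qc_qle_len hle) (fun h => hστ (qc_qle_len_eq hle h))
      have hk1 : 1 ≤ σ.1 := by
        rcases h2 with ⟨⟨j, _⟩, _⟩ | ⟨⟨j, _⟩, _⟩ | ⟨_, ⟨j, _⟩, _⟩ <;> exact j.pos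
      have hk2 : 2 ≤ σ.1 := by
        by_contra hcon
        have hk : σ.1 = 1 := by omega
        have hn2 : 2 ≤ τ.1 := by omega
        have hocc : ∀ p : Fin τ.1, IsOcc qa σ.2 τ.2 (fun _ => p) := by
          intro p
          refine ⟨?_, ?_, ?_⟩
          · intro a b hab
            have ha := a.2
            have hb := b.2
            rw [Fin.lt_def] at hab
            omega
          · intro i j
            have : i = j := Fin.ext (by have := i.2; have := j.2; omega)
            subst this
            simp
          · intro i hik _
            omega
        have e0 := huniq _ (hocc ⟨0, by omega⟩)
        have e1 := huniq _ (hocc ⟨1, hn2⟩)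
        have h01 := congrArg Fin.val (congrFun (e0.trans e1.symm) ⟨0, by omega⟩)
        simp at h01
      have uniq : ∀ ρ₁ ρ₂ : QPerm, ρ₁ ∈ QInterval σ τ → ρ₂ ∈ QInterval σ τ →
          ρ₁.1 = ρ₂.1 → ρ₁ = ρ₂ := by
        intro ρ₁ ρ₂ h₁ h₂ hlen12
        obtain ⟨m, π₁⟩ := ρ₁
        obtain ⟨m₂, π₂⟩ := ρ₂
        have hm : m = m₂ := hlen12
        subst hm
        obtain ⟨hA, hB⟩ := h₁
        obtain ⟨hA2, hB2⟩ := h₂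
        obtain ⟨h1f, hh1⟩ := qc_qle_occ hA
        obtain ⟨g1, hg1⟩ := qc_qle_occ hB
        obtain ⟨h2f, hh2⟩ := qc_qle_occ hA2
        obtain ⟨g2, hg2⟩ := qc_qle_occ hB2
        have hm2 : 2 ≤ m := le_trans hk2 (qc_qle_len hA)
        have hc1 : ∀ j, g1 (h1f j) = f j :=
          fun j => congrFun (huniq _ (qc_isOcc_comp hh1 hg1)) j
        have hc2 : ∀ j, g2 (h2f j) = f j :=
          fun j => congrFun (huniq _ (qc_isOcc_comp hh2 hg2)) j
        have hgval : ∀ p : Fin m, (g1 p : ℕ) = (g2 p : ℕ) := by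
          rcases h2 with ⟨hI0, hI1, _⟩ | ⟨hI0, _, hIn⟩ | ⟨hI0, hI1, hIn⟩
          · obtain ⟨x0, hx0⟩ := hI0
            obtain ⟨x1, hx1⟩ := hI1
            have hx1v : (x1 : ℕ) = 1 := by
              have hle1 := qc_sm_ge hf.1 x1
              by_cases hz : (x1 : ℕ) = 0
              · exfalso
                have hx0v : (x0 : ℕ) = 0 := by have := qc_sm_ge hf.1 x0; omega
                have hee : x1 = x0 := Fin.ext (by omega)
                rw [hee, hx0] at hx1
                omega
              · omega
            intro p
            rw [qc_gvalA hg1 hh1 hc1 hx0 hx1v hx1 p, qc_gvalA hg2 hh2 hc2 hx0 hx1v hx1 p]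
          · obtain ⟨x0, hx0⟩ := hI0
            obtain ⟨xk, hxk⟩ := hIn
            intro p
            rw [qc_gvalB hg1 hh1 hc1 hx0 hxk p, qc_gvalB hg2 hh2 hc2 hx0 hxk p]
          · obtain ⟨x1, hx1⟩ := hI1
            obtain ⟨xk, hxk⟩ := hIn
            intro p
            rw [qc_gvalC hg1 hh1 hc1 hx1 hxk hm2 p, qc_gvalC hg2 hh2 hc2 hx1 hxk hm2 p]
        have hgeq : ∀ p, g1 p = g2 p := fun p => Fin.ext (hgval p)
        have hpat : ∀ i j : Fin m, π₁ i < π₁ j ↔ π₂ i < π₂ j := by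
          intro i j
          refine (hg1.2.1 i j).trans ?_
          rw [hgeq i, hgeq j]
          exact (hg2.2.1 i j).symm
        have hππ : π₁ = π₂ := qc_perm_eq_of_pattern π₁ π₂ hpat
        rw [hππ]
      exact qc_qchain_of_uniq uniq
  refine ⟨hchain, ?_, ?_⟩
  · intro hlen
    exact qc_qMu_cover hle hlen
  · intro hlt
    exact qc_qMu_chain_zero τ.1 σ τ le_rfl hle hchain (by omega)
end
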